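/- arXiv:1405.2135 — 6 statements merged into one kernel-verified Lean document; each statement's English description precedes it below -/
import Mathlib

section
/- Flow equation (generalizing Goss): let F be a field complete with respect to a non-Archimedean norm, let a : ℕ → F satisfy ‖a_n‖ < c for all n with c > 0, let u : ℕ → F be a null sequence, and let z ∈ F with ‖z‖ < 1. Then all the series below converge and ∑_{n≥0} (∑_{k≥0} choose(n+k,k)·u_k·a_{n+k})·z^n = ∑_{j≥0} a_j·(∑_{m=0}^{j} choose(j,m)·u_m·z^{j-m}). In words: the flow of the umbra u applied to the bounded power series P = ∑ a_j T^j, evaluated at z, equals the umbral evaluation of P(z + α), where α^m is replaced by u_m. -/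
open Filter

set_option maxHeartbeats 1000000

/-- The flow equation (generalizing Goss): for a bounded power series
`P = ∑ a_j T^j`, a null sequence `u` and `‖z‖ < 1`, the flow of the umbra `u`
applied to `P` and evaluated at `z` equals the umbral evaluation of
`P(z + α)`, where `α^m` is replaced by `u_m`. -/
theorem flow_equation {F : Type*} [NormedField F] [CompleteSpace F]
    (hna : ∀ x y : F, ‖x + y‖ ≤ max ‖x‖ ‖y‖)
    (a : ℕ → F) (c : ℝ) (hc : 0 < c) (ha : ∀ n : ℕ, ‖a n‖ < c)
    (u : ℕ → F) (hu : Tendsto u atTop (nhds 0))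
    (z : F) (hz : ‖z‖ < 1) :
    (∀ n : ℕ, Summable fun k : ℕ => ((n + k).choose k : F) * u k * a (n + k)) ∧
      (Summable fun n : ℕ =>
        (∑' k : ℕ, ((n + k).choose k : F) * u k * a (n + k)) * z ^ n) ∧
      (Summable fun j : ℕ =>
        a j * ∑ m ∈ Finset.range (j + 1), (j.choose m : F) * u m * z ^ (j - m)) ∧
      ∑' n : ℕ, (∑' k : ℕ, ((n + k).choose k : F) * u k * a (n + k)) * z ^ n =
        ∑' j : ℕ, a j * ∑ m ∈ Finset.range (j + 1),
          (j.choose m : F) * u m * z ^ (j - m) := by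
  haveI hud : IsUltrametricDist F :=
    IsUltrametricDist.isUltrametricDist_of_forall_norm_add_le_max_norm hna
  -- a bound for `u`
  obtain ⟨U, hU⟩ : ∃ U : ℝ, ∀ k, ‖u k‖ ≤ U := by
    obtain ⟨U, hUm⟩ := hu.norm.bddAbove_range
    exact ⟨U, fun k => hUm ⟨k, rfl⟩⟩
  set s : ℕ → ℕ → F := fun n k => ((n + k).choose k : F) * u k * a (n + k) with hs
  have hsb : ∀ n k : ℕ, ‖s n k‖ ≤ ‖u k‖ * c := by
    intro n k
    calc ‖s n k‖ = ‖(((n + k).choose k : ℕ) : F)‖ * ‖u k‖ * ‖a (n + k)‖ := by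
          simp [hs, norm_mul]
      _ ≤ 1 * ‖u k‖ * c := by
          gcongr
          · exact IsUltrametricDist.norm_natCast_le_one F _
          · exact (ha _).le
      _ = ‖u k‖ * c := by ring
  set g : ℕ × ℕ → F := fun p => s p.1 p.2 * z ^ p.1 with hg
  have hgb : ∀ p : ℕ × ℕ, ‖g p‖ ≤ ‖u p.2‖ * c * ‖z‖ ^ p.1 := by
    intro p
    calc ‖g p‖ = ‖s p.1 p.2‖ * ‖z‖ ^ p.1 := by simp [hg, norm_mul]
      _ ≤ (‖u p.2‖ * c) * ‖z‖ ^ p.1 := by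
          gcongr
          exact hsb _ _
  have hunorm : Tendsto (fun k => ‖u k‖) atTop (nhds 0) := by
    simpa using hu.norm
  have hzpow : Tendsto (fun n : ℕ => ‖z‖ ^ n) atTop (nhds 0) :=
    tendsto_pow_atTop_nhds_zero_of_lt_one (norm_nonneg z) hz
  -- the double-indexed family tends to zero cofinitely
  have htend : Tendsto (fun p : ℕ × ℕ => ‖u p.2‖ * c * ‖z‖ ^ p.1) cofinite (nhds 0) := by
    rw [← Filter.coprod_cofinite, Nat.cofinite_eq_atTop]
    have hco : (atTop : Filter ℕ).coprod (atTop : Filter ℕ) =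
        (atTop : Filter ℕ).comap Prod.fst ⊔ (atTop : Filter ℕ).comap Prod.snd := rfl
    rw [hco, tendsto_sup]
    constructor
    · have h1 : Tendsto (fun p : ℕ × ℕ => U * c * ‖z‖ ^ p.1)
          ((atTop : Filter ℕ).comap Prod.fst) (nhds 0) := by
        have := (hzpow.const_mul (U * c)).comp
          (tendsto_comap : Tendsto (Prod.fst : ℕ × ℕ → ℕ) ((atTop : Filter ℕ).comap Prod.fst) atTop)
        simpa [Function.comp_def] using this
      refine squeeze_zero (fun p => by positivity) (fun p => ?_) h1
      exact mul_le_mul_of_nonneg_right (mul_le_mul_of_nonneg_right (hU p.2) hc.le)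
        (pow_nonneg (norm_nonneg z) p.1)
    · have h2 : Tendsto (fun p : ℕ × ℕ => ‖u p.2‖ * c)
          ((atTop : Filter ℕ).comap Prod.snd) (nhds 0) := by
        have := (hunorm.mul_const c).comp
          (tendsto_comap : Tendsto (Prod.snd : ℕ × ℕ → ℕ) ((atTop : Filter ℕ).comap Prod.snd) atTop)
        simpa [Function.comp_def] using this
      refine squeeze_zero (fun p => by positivity) (fun p => ?_) h2
      calc ‖u p.2‖ * c * ‖z‖ ^ p.1 ≤ ‖u p.2‖ * c * 1 :=
            mul_le_mul_of_nonneg_left (pow_le_one₀ (norm_nonneg z) hz.le) (by positivity)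
        _ = ‖u p.2‖ * c := by ring
  have hgt : Tendsto g cofinite (nhds 0) := by
    rw [tendsto_zero_iff_norm_tendsto_zero]
    exact squeeze_zero (fun p => norm_nonneg _) hgb htend
  have hgsum : Summable g := NonarchimedeanAddGroup.summable_of_tendsto_cofinite_zero hgt
  -- claim 1
  have claim1 : ∀ n : ℕ, Summable (s n) := by
    intro n
    apply NonarchimedeanAddGroup.summable_of_tendsto_cofinite_zero
    rw [tendsto_zero_iff_norm_tendsto_zero, Nat.cofinite_eq_atTop]
    have h1 : Tendsto (fun k : ℕ => ‖u k‖ * c) atTop (nhds 0) := by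
      simpa using hunorm.mul_const c
    exact squeeze_zero (fun k => norm_nonneg _) (fun k => hsb n k) h1
  -- claim 2
  have hfun : (fun n : ℕ => (∑' k : ℕ, s n k) * z ^ n) = fun n => ∑' k : ℕ, g (n, k) := by
    funext n
    rw [← tsum_mul_right]
  have claim2 : Summable fun n : ℕ => (∑' k : ℕ, s n k) * z ^ n := by
    rw [hfun]
    exact hgsum.prod
  -- the sigma reindexing
  have hf' : Summable fun x : Σ j : ℕ, Finset.HasAntidiagonal.antidiagonal j => g x.2 :=
    Finset.HasAntidiagonal.sigmaAntidiagonalEquivProd.summable_iff.mpr hgsum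
  have hTeq : ∀ j : ℕ, ∑ p ∈ Finset.HasAntidiagonal.antidiagonal j, g p =
      a j * ∑ m ∈ Finset.range (j + 1), (j.choose m : F) * u m * z ^ (j - m) := by
    intro j
    rw [Finset.mul_sum, Finset.Nat.sum_antidiagonal_eq_sum_range_succ_mk]
    conv_rhs => rw [← Finset.sum_range_reflect]
    refine Finset.sum_congr rfl fun m hm => ?_
    have hm' : m ≤ j := Nat.lt_succ_iff.mp (Finset.mem_range.mp hm)
    have h1 : j + 1 - 1 - m = j - m := by omega
    simp only [hg, hs, h1]
    rw [Nat.add_sub_cancel' hm', Nat.sub_sub_self hm', Nat.choose_symm hm']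
    ring
  have hsub : ∀ j : ℕ, (∑' p : (Finset.HasAntidiagonal.antidiagonal j : Finset (ℕ × ℕ)), g p) =
      ∑ p ∈ Finset.HasAntidiagonal.antidiagonal j, g p := fun j => Finset.tsum_subtype _ _
  have claim3 : Summable fun j : ℕ =>
      a j * ∑ m ∈ Finset.range (j + 1), (j.choose m : F) * u m * z ^ (j - m) := by
    have h2 := hf'.sigma
    have h3 : (fun j : ℕ => ∑' p : (Finset.HasAntidiagonal.antidiagonal j : Finset (ℕ × ℕ)), g p) =
        fun j => a j * ∑ m ∈ Finset.range (j + 1), (j.choose m : F) * u m * z ^ (j - m) := by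
      funext j
      rw [hsub j, hTeq j]
    rw [← h3]
    exact h2
  refine ⟨claim1, claim2, claim3, ?_⟩
  calc ∑' n : ℕ, (∑' k : ℕ, s n k) * z ^ n
      = ∑' n : ℕ, ∑' k : ℕ, g (n, k) := by rw [hfun]
    _ = ∑' p : ℕ × ℕ, g p := (Summable.tsum_prod hgsum).symm
    _ = ∑' x : Σ j : ℕ, Finset.HasAntidiagonal.antidiagonal j, g (Finset.HasAntidiagonal.sigmaAntidiagonalEquivProd x) :=
        (Finset.HasAntidiagonal.sigmaAntidiagonalEquivProd.tsum_eq g).symm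
    _ = ∑' j : ℕ, ∑' p : (Finset.HasAntidiagonal.antidiagonal j : Finset (ℕ × ℕ)), g p := Summable.tsum_sigma hf'
    _ = ∑' j : ℕ, a j * ∑ m ∈ Finset.range (j + 1), (j.choose m : F) * u m * z ^ (j - m) :=
        tsum_congr fun j => by rw [hsub j, hTeq j]
end

section
/- Power rule for Hasse derivatives: let R be a commutative ring, P ∈ R⟦T⟧, n ≥ 1 and k ≥ 2. Then D^{(n)}(P^k) = ∑_{h=1}^{k} choose(k,h)·P^{k-h}·(∑_{(i₁,…,i_h)} D^{(i₁)}P ⋯ D^{(i_h)}P), where the inner sum runs over all h-tuples of positive integers i₁,…,i_h with i₁ + ⋯ + i_h = n. -/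
/-- The `k`-th Hasse derivative of a formal power series. -/
noncomputable def hasseDeriv {R : Type*} [CommRing R] (k : ℕ) (P : PowerSeries R) :
    PowerSeries R :=
  PowerSeries.mk fun n => ((n + k).choose k : R) * PowerSeries.coeff (n + k) P

section Aux

variable {R : Type*} [CommRing R]

lemma coeff_hasseDeriv (k m : ℕ) (P : PowerSeries R) :
    PowerSeries.coeff m (hasseDeriv k P) =
      ((m + k).choose k : R) * PowerSeries.coeff (m + k) P := by
  simp [hasseDeriv]

lemma hasseDeriv_zero' (P : PowerSeries R) : hasseDeriv 0 P = P := by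
  ext m; simp [coeff_hasseDeriv]

lemma hasseDeriv_mul (k : ℕ) (P Q : PowerSeries R) :
    hasseDeriv k (P * Q) =
      ∑ ij ∈ Finset.HasAntidiagonal.antidiagonal k, hasseDeriv ij.1 P * hasseDeriv ij.2 Q := by
  ext m
  set N := m + k + 1 with hN
  set f := PowerSeries.trunc N P with hf
  set g := PowerSeries.trunc N Q with hg
  have hfc : ∀ a, a ≤ m + k → f.coeff a = PowerSeries.coeff a P := by
    intro a ha
    rw [hf, PowerSeries.coeff_trunc, if_pos (by omega)]
  have hgc : ∀ a, a ≤ m + k → g.coeff a = PowerSeries.coeff a Q := by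
    intro a ha
    rw [hg, PowerSeries.coeff_trunc, if_pos (by omega)]
  have lhs : PowerSeries.coeff m (hasseDeriv k (P * Q)) =
      (Polynomial.hasseDeriv k (f * g)).coeff m := by
    rw [coeff_hasseDeriv, Polynomial.hasseDeriv_coeff, Polynomial.coeff_mul,
      PowerSeries.coeff_mul]
    congr 1
    refine Finset.sum_congr rfl fun ab hab => ?_
    rw [Finset.HasAntidiagonal.mem_antidiagonal] at hab
    rw [hfc _ (by omega), hgc _ (by omega)]
  rw [lhs, Polynomial.hasseDeriv_mul, Polynomial.finset_sum_coeff, map_sum]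
  refine Finset.sum_congr rfl fun ij hij => ?_
  rw [Finset.HasAntidiagonal.mem_antidiagonal] at hij
  rw [Polynomial.coeff_mul, PowerSeries.coeff_mul]
  refine Finset.sum_congr rfl fun cd hcd => ?_
  rw [Finset.HasAntidiagonal.mem_antidiagonal] at hcd
  rw [Polynomial.hasseDeriv_coeff, Polynomial.hasseDeriv_coeff,
    coeff_hasseDeriv, coeff_hasseDeriv, hfc _ (by omega), hgc _ (by omega)]

lemma mk_hasseDeriv_pow (P : PowerSeries R) (k : ℕ) :
    (PowerSeries.mk fun j => hasseDeriv j (P ^ k) : PowerSeries (PowerSeries R)) =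
      (PowerSeries.mk fun j => hasseDeriv j P) ^ k := by
  induction k with
  | zero =>
    ext j : 1
    rw [PowerSeries.coeff_mk, pow_zero, pow_zero, PowerSeries.coeff_one]
    rcases j with _ | j
    · simp [hasseDeriv_zero']
    · rw [if_neg (by omega)]
      ext m
      rw [coeff_hasseDeriv, PowerSeries.coeff_one, if_neg (by omega)]
      simp
  | succ k ih =>
    ext j : 1
    rw [pow_succ, pow_succ, ← ih, PowerSeries.coeff_mul, PowerSeries.coeff_mk,
      hasseDeriv_mul]
    refine Finset.sum_congr rfl fun ab hab => ?_
    rw [PowerSeries.coeff_mk, PowerSeries.coeff_mk]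

end Aux

lemma sum_antidiagonalTuple_succ {M : Type*} [AddCommMonoid M] {k n : ℕ}
    (f : (Fin (k + 1) → ℕ) → M) :
    ∑ i ∈ Finset.Nat.antidiagonalTuple (k + 1) n, f i =
      ∑ ab ∈ Finset.HasAntidiagonal.antidiagonal n,
        ∑ i ∈ Finset.Nat.antidiagonalTuple k ab.2, f (Fin.cons ab.1 i) := by
  rw [Finset.sum_sigma']
  refine Finset.sum_nbij' (i := fun y => (⟨(y 0, n - y 0), Fin.tail y⟩ :
      Σ _ : ℕ × ℕ, (Fin k → ℕ))) (j := fun x => Fin.cons x.1.1 x.2) ?_ ?_ ?_ ?_ ?_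
  · intro y hy
    rw [Finset.Nat.mem_antidiagonalTuple, Fin.sum_univ_succ] at hy
    rw [Finset.mem_sigma]
    dsimp only
    rw [Finset.HasAntidiagonal.mem_antidiagonal, Finset.Nat.mem_antidiagonalTuple]
    have htl : ∑ j, Fin.tail y j = ∑ j : Fin k, y j.succ := rfl
    constructor <;> omega
  · intro x hx
    rw [Finset.mem_sigma, Finset.HasAntidiagonal.mem_antidiagonal,
      Finset.Nat.mem_antidiagonalTuple] at hx
    rw [Finset.Nat.mem_antidiagonalTuple, Fin.sum_cons, hx.2]
    exact hx.1
  · intro y hy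
    exact Fin.cons_self_tail y
  · intro x hx
    obtain ⟨⟨a, b⟩, i⟩ := x
    rw [Finset.mem_sigma, Finset.HasAntidiagonal.mem_antidiagonal,
      Finset.Nat.mem_antidiagonalTuple] at hx
    dsimp only at hx ⊢
    have h0 : (Fin.cons a i : Fin (k+1) → ℕ) 0 = a := rfl
    have ht : Fin.tail (Fin.cons a i : Fin (k+1) → ℕ) = i := Fin.tail_cons _ _
    have hb : n - a = b := by omega
    rw [h0, ht, hb]
  · intro y hy
    exact congrArg f (Fin.cons_self_tail y).symm

lemma coeff_pow_tuple {A : Type*} [CommRing A] (f : PowerSeries A) (k n : ℕ) :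
    PowerSeries.coeff n (f ^ k) =
      ∑ i ∈ Finset.Nat.antidiagonalTuple k n, ∏ j, PowerSeries.coeff (i j) f := by
  induction k generalizing n with
  | zero =>
    rcases n with _ | n
    · simp [Finset.Nat.antidiagonalTuple_zero_zero]
    · simp [Finset.Nat.antidiagonalTuple_zero_succ, PowerSeries.coeff_one]
  | succ k ih =>
    rw [pow_succ, mul_comm, PowerSeries.coeff_mul, sum_antidiagonalTuple_succ]
    refine Finset.sum_congr rfl fun ab hab => ?_
    rw [ih, Finset.mul_sum]
    refine Finset.sum_congr rfl fun i hi => ?_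
    simp [Fin.prod_univ_succ]

/-- Power rule for Hasse derivatives:
`D^(n)(P^k) = ∑_{h=1}^{k} choose(k,h)·P^{k-h}·(∑ D^(i₁)P ⋯ D^(i_h)P)`,
the inner sum over all `h`-tuples of positive integers summing to `n`. -/
theorem hasseDeriv_pow {R : Type*} [CommRing R] (P : PowerSeries R)
    (n k : ℕ) (hn : 1 ≤ n) (hk : 2 ≤ k) :
    hasseDeriv n (P ^ k) =
      ∑ h ∈ Finset.Icc 1 k, (k.choose h : PowerSeries R) * P ^ (k - h) *
        ∑ i ∈ (Finset.Nat.antidiagonalTuple h n).filter (fun i => ∀ j, 0 < i j),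
          ∏ j : Fin h, hasseDeriv (i j) P := by
  classical
  have key := congrArg (PowerSeries.coeff n) (mk_hasseDeriv_pow P k)
  rw [PowerSeries.coeff_mk] at key
  set E : PowerSeries (PowerSeries R) :=
    PowerSeries.mk fun j => if j = 0 then 0 else hasseDeriv j P with hE
  have hsplit : (PowerSeries.mk fun j => hasseDeriv j P : PowerSeries (PowerSeries R))
      = E + PowerSeries.C P := by
    ext j : 1
    rcases j with _ | j
    · simp [hE, hasseDeriv_zero']
    · simp [hE, PowerSeries.coeff_C]
  have hterm : ∀ h : ℕ,
      PowerSeries.coeff n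
        (E ^ h * (PowerSeries.C P) ^ (k - h)
          * ((k.choose h : ℕ) : PowerSeries (PowerSeries R)))
      = (k.choose h : PowerSeries R) * P ^ (k - h) *
          ∑ i ∈ (Finset.Nat.antidiagonalTuple h n).filter (fun i => ∀ j, 0 < i j),
            ∏ j : Fin h, hasseDeriv (i j) P := by
    intro h
    rw [← map_natCast (PowerSeries.C (R := PowerSeries R)) (k.choose h), ← map_pow,
      mul_assoc, ← map_mul, PowerSeries.coeff_mul_C, coeff_pow_tuple]
    have hco : ∀ i : Fin h → ℕ, ∀ j : Fin h,
        PowerSeries.coeff (i j) E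
          = if i j = 0 then 0 else hasseDeriv (i j) P := fun i j => by
      rw [hE, PowerSeries.coeff_mk]
    have hfil : ∑ i ∈ Finset.Nat.antidiagonalTuple h n,
          ∏ j : Fin h, PowerSeries.coeff (i j) E
        = ∑ i ∈ (Finset.Nat.antidiagonalTuple h n).filter (fun i => ∀ j, 0 < i j),
            ∏ j : Fin h, hasseDeriv (i j) P := by
      rw [← Finset.sum_filter_of_ne (p := fun i => ∀ j, 0 < i j) ?_]
      · refine Finset.sum_congr rfl fun i hi => Finset.prod_congr rfl fun j _ => ?_
        rw [Finset.mem_filter] at hi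
        rw [hco i j, if_neg (Nat.pos_iff_ne_zero.mp (hi.2 j))]
      · intro i _ hne j
        by_contra hj
        refine hne (Finset.prod_eq_zero (Finset.mem_univ j) ?_)
        rw [hco i j, if_pos (by omega)]
    rw [hfil]
    ring
  rw [key, hsplit, add_pow, map_sum]
  rw [Finset.sum_congr rfl fun h _ => hterm h]
  refine (Finset.sum_subset ?_ ?_).symm
  · intro h hh
    rw [Finset.mem_Icc] at hh
    rw [Finset.mem_range]
    omega
  · intro h hh hnot
    rw [Finset.mem_range] at hh
    rw [Finset.mem_Icc] at hnot
    have h0 : h = 0 := by omega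
    subst h0
    have : Finset.Nat.antidiagonalTuple 0 n = ∅ := by
      rcases n with _ | n
      · omega
      · exact Finset.Nat.antidiagonalTuple_zero_succ n
    rw [this]
    simp
end

section
/- Goss's duality theorem (the 'if' direction): let F be a field of characteristic p > 0, complete with respect to a non-Archimedean norm. Let H be an additive generator with a two-sided composition inverse Hinv (Hinv∘H = T = H∘Hinv) which is also an additive generator. Let u : ℕ → F be a null sequence with u_0 = 1, and define v_k := ∑_{m≥0} (coeff_m(Hinv^k))·u_m. Then for every bounded P ∈ F⟦T⟧ one has (Flow(u,P))∘H = Flow(v, P∘H); i.e., the flow of v is conjugate to the flow of u under the additive isomorphism generated by H. -/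
open Filter

/-- Composition `P ∘ H` of power series, for `H` with zero constant
coefficient. -/
noncomputable def psComp {F : Type*} [Field F] (P H : PowerSeries F) : PowerSeries F :=
  PowerSeries.mk fun n => ∑ k ∈ Finset.range (n + 1),
    PowerSeries.coeff k P * PowerSeries.coeff n (H ^ k)

/-- The flow of the umbra `u` applied to the power series `P`: the `n`-th
coefficient is the (convergent) sum `∑_k choose(n+k,k)·u_k·a_{n+k}`. -/
noncomputable def psFlow {F : Type*} [NormedField F] (u : ℕ → F) (P : PowerSeries F) :
    PowerSeries F :=
  PowerSeries.mk fun n =>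
    ∑' k : ℕ, ((n + k).choose k : F) * u k * PowerSeries.coeff (n + k) P

/-- An additive generator: zero constant coefficient, supported on exponents
that are powers of `p`, all coefficients of norm at most `1`, and coefficient
of `T` of norm exactly `1`. -/
def IsAddGen {F : Type*} [NormedField F] (p : ℕ) (H : PowerSeries F) : Prop :=
  PowerSeries.constantCoeff H = 0 ∧
    (∀ n : ℕ, (¬ ∃ m : ℕ, n = p ^ m) → PowerSeries.coeff n H = 0) ∧
    (∀ n : ℕ, ‖PowerSeries.coeff n H‖ ≤ 1) ∧ ‖PowerSeries.coeff 1 H‖ = 1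

section NAHelpers

variable {F : Type*} [NormedField F]

lemma na_sum_le (hna : ∀ x y : F, ‖x + y‖ ≤ max ‖x‖ ‖y‖)
    {ι : Type*} {ε : ℝ} (hε : 0 ≤ ε) (f : ι → F) :
    ∀ (s : Finset ι), (∀ i ∈ s, ‖f i‖ ≤ ε) → ‖∑ i ∈ s, f i‖ ≤ ε := by
  intro s
  classical
  induction s using Finset.induction_on with
  | empty => intro _; simpa using hε
  | @insert a s' ha ih =>
    intro h
    rw [Finset.sum_insert ha]
    exact le_trans (hna _ _) (max_le (h a (by simp))
      (ih fun i hi => h i (by simp [hi])))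

lemma na_tsum_le (hna : ∀ x y : F, ‖x + y‖ ≤ max ‖x‖ ‖y‖)
    {ι : Type*} {ε : ℝ} (hε : 0 ≤ ε) (f : ι → F)
    (h : ∀ i, ‖f i‖ ≤ ε) : ‖∑' i, f i‖ ≤ ε := by
  by_cases hs : Summable f
  · refine le_of_tendsto (hs.hasSum.norm) ?_
    exact Eventually.of_forall fun s => na_sum_le hna hε f s fun i _ => h i
  · rw [tsum_eq_zero_of_not_summable hs]; simpa using hε

lemma na_summable [CompleteSpace F] (hna : ∀ x y : F, ‖x + y‖ ≤ max ‖x‖ ‖y‖)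
    {ι : Type*} (f : ι → F) (h : Tendsto f cofinite (nhds 0)) : Summable f := by
  haveI : NonarchimedeanAddGroup F := by
    refine ⟨fun U hU => ?_⟩
    obtain ⟨ε, hε, hball⟩ := Metric.mem_nhds_iff.mp hU
    refine ⟨⟨{ carrier := {x : F | ‖x‖ < ε},
               add_mem' := fun {a b} ha hb => lt_of_le_of_lt (hna a b) (max_lt ha hb),
               zero_mem' := by simpa using hε,
               neg_mem' := fun {a} ha => by simpa using ha }, ?_⟩, ?_⟩
    · have : {x : F | ‖x‖ < ε} = Metric.ball (0 : F) ε := by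
        ext x; simp [Metric.mem_ball, dist_zero_right]
      simpa [this] using Metric.isOpen_ball
    · intro x hx
      exact hball (by simpa [Metric.mem_ball, dist_zero_right] using (show ‖x‖ < ε from hx))
  exact NonarchimedeanAddGroup.summable_of_tendsto_cofinite_zero h

lemma na_natCast_le (hna : ∀ x y : F, ‖x + y‖ ≤ max ‖x‖ ‖y‖) :
    ∀ n : ℕ, ‖(n : F)‖ ≤ 1
  | 0 => by simp
  | n + 1 => by
    push_cast
    exact le_trans (hna _ _) (max_le (na_natCast_le hna n) (by simp))

end NAHelpers

section PS

variable {F : Type*} [Field F]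

lemma coeff_psComp (P G : PowerSeries F) (n : ℕ) :
    PowerSeries.coeff n (psComp P G)
      = ∑ k ∈ Finset.range (n + 1), PowerSeries.coeff k P * PowerSeries.coeff n (G ^ k) := by
  simp [psComp]

lemma coeff_pow_eq_zero {G : PowerSeries F} (hG : PowerSeries.constantCoeff G = 0)
    {m j : ℕ} (h : j < m) : PowerSeries.coeff j (G ^ m) = 0 := by
  have : (PowerSeries.X : PowerSeries F) ^ m ∣ G ^ m :=
    pow_dvd_pow_of_dvd (PowerSeries.X_dvd_iff.mpr hG) m
  exact (PowerSeries.X_pow_dvd_iff.mp this) j h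

lemma coeff_eval₂ (q : Polynomial F) {G : PowerSeries F}
    (hG : PowerSeries.constantCoeff G = 0) (n : ℕ) :
    PowerSeries.coeff n (q.eval₂ PowerSeries.C G)
      = ∑ k ∈ Finset.range (n + 1), q.coeff k * PowerSeries.coeff n (G ^ k) := by
  rw [Polynomial.eval₂_eq_sum_range, map_sum]
  simp only [PowerSeries.coeff_C_mul]
  set M := q.natDegree + 1 with hM
  rcases le_total M (n + 1) with hle | hle
  · rw [← Finset.sum_subset (Finset.range_subset_range.mpr hle)]
    intro k hk hk'
    rw [Polynomial.coeff_eq_zero_of_natDegree_lt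
      (by simp only [Finset.mem_range, not_lt] at hk'; omega), zero_mul]
  · rw [Finset.sum_subset (Finset.range_subset_range.mpr hle)]
    intro k hk hk'
    rw [coeff_pow_eq_zero hG (by simp only [Finset.mem_range, not_lt] at hk'; omega), mul_zero]

lemma coeff_psComp_trunc (P : PowerSeries F) {G : PowerSeries F}
    (hG : PowerSeries.constantCoeff G = 0) {n N : ℕ} (hN : n < N) :
    PowerSeries.coeff n (psComp P G)
      = PowerSeries.coeff n ((PowerSeries.trunc N P).eval₂ PowerSeries.C G) := by
  rw [coeff_psComp, coeff_eval₂ _ hG]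
  refine Finset.sum_congr rfl fun k hk => ?_
  rw [PowerSeries.coeff_trunc, if_pos (by simp only [Finset.mem_range] at hk; omega)]

lemma psComp_mul {f g G : PowerSeries F} (hG : PowerSeries.constantCoeff G = 0) :
    psComp (f * g) G = psComp f G * psComp g G := by
  ext n
  rw [PowerSeries.coeff_mul, coeff_psComp_trunc (f * g) hG (Nat.lt_succ_self n)]
  have hright : ∀ p ∈ Finset.HasAntidiagonal.antidiagonal n,
      PowerSeries.coeff p.1 (psComp f G) * PowerSeries.coeff p.2 (psComp g G)
        = PowerSeries.coeff p.1 ((PowerSeries.trunc (n+1) f).eval₂ PowerSeries.C G) *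
          PowerSeries.coeff p.2 ((PowerSeries.trunc (n+1) g).eval₂ PowerSeries.C G) := by
    intro p hp
    rw [Finset.HasAntidiagonal.mem_antidiagonal] at hp
    rw [coeff_psComp_trunc f hG (N := n+1) (by omega),
      coeff_psComp_trunc g hG (N := n+1) (by omega)]
  rw [Finset.sum_congr rfl hright, ← PowerSeries.coeff_mul, ← Polynomial.eval₂_mul]
  rw [coeff_eval₂ _ hG, coeff_eval₂ _ hG]
  refine Finset.sum_congr rfl fun k hk => ?_
  simp only [Finset.mem_range] at hk
  congr 1
  rw [PowerSeries.coeff_trunc, if_pos (by omega), Polynomial.coeff_mul, PowerSeries.coeff_mul]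
  refine Finset.sum_congr rfl fun p hp => ?_
  rw [Finset.HasAntidiagonal.mem_antidiagonal] at hp
  rw [PowerSeries.coeff_trunc, if_pos (by omega), PowerSeries.coeff_trunc, if_pos (by omega)]

lemma psComp_one {G : PowerSeries F} : psComp 1 G = 1 := by
  ext n
  rw [coeff_psComp]
  rw [Finset.sum_eq_single 0]
  · simp
  · intro k hk hk0
    rw [PowerSeries.coeff_one, if_neg hk0, zero_mul]
  · intro h; exact absurd (Finset.mem_range.mpr (by omega)) h

lemma psComp_pow {f G : PowerSeries F} (hG : PowerSeries.constantCoeff G = 0) (s : ℕ) :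
    psComp (f ^ s) G = (psComp f G) ^ s := by
  induction s with
  | zero => simpa using psComp_one
  | succ s ih => rw [pow_succ, psComp_mul hG, ih, pow_succ]

noncomputable def Emap (F : Type*) [Field F] : Polynomial F →+* Polynomial (Polynomial F) :=
  Polynomial.eval₂RingHom ((Polynomial.C).comp (Polynomial.C))
    (Polynomial.X + Polynomial.C Polynomial.X)

lemma Emap_monomial (i : ℕ) (a : F) :
    Emap F ((Polynomial.monomial i) a)
      = Polynomial.C (Polynomial.C a) * (Polynomial.X + Polynomial.C Polynomial.X) ^ i := by
  simp [Emap, Polynomial.eval₂_monomial]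

lemma Emap_coeff (q : Polynomial F) (n k : ℕ) :
    ((Emap F q).coeff n).coeff k = ((n + k).choose k : F) * q.coeff (n + k) := by
  induction q using Polynomial.induction_on' with
  | add f g hf hg => simp [hf, hg, mul_add]
  | monomial i a =>
    rw [Emap_monomial, Polynomial.coeff_C_mul, Polynomial.coeff_X_add_C_pow,
      Polynomial.coeff_C_mul]
    rw [← Polynomial.C_eq_natCast, Polynomial.coeff_mul_C, Polynomial.coeff_X_pow,
      Polynomial.coeff_monomial]
    by_cases hi : i = n + k
    · subst hi
      rw [if_pos rfl, if_pos (by omega), one_mul, Nat.choose_symm_add]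
      ring
    · rw [if_neg hi, mul_zero]
      by_cases hk : k = i - n
      · rcases lt_or_ge i n with hn | hn
        · rw [Nat.choose_eq_zero_of_lt hn]; simp
        · exact absurd (by omega) hi
      · rw [if_neg hk, zero_mul, mul_zero]

lemma Emap_additive (p : ℕ) [Fact p.Prime] [CharP F p] (h : Polynomial F)
    (h0 : h.coeff 0 = 0) (hsupp : ∀ j : ℕ, (¬ ∃ m : ℕ, j = p ^ m) → h.coeff j = 0) :
    Emap F h = h.map Polynomial.C + Polynomial.C h := by
  haveI : CharP (Polynomial (Polynomial F)) p :=
    charP_of_injective_ringHom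
      (f := (Polynomial.C : Polynomial F →+* Polynomial (Polynomial F)).comp Polynomial.C)
      (Polynomial.C_injective.comp Polynomial.C_injective) p
  conv_lhs => rw [h.as_sum_support]
  conv_rhs => rw [h.as_sum_support]
  rw [map_sum, Polynomial.map_sum, map_sum, ← Finset.sum_add_distrib]
  refine Finset.sum_congr rfl fun i hi => ?_
  have hi0 : i ≠ 0 := by
    intro h'; subst h'
    exact (Polynomial.mem_support_iff.mp hi) h0
  obtain ⟨m, hm⟩ : ∃ m : ℕ, i = p ^ m := by
    by_contra hc
    exact (Polynomial.mem_support_iff.mp hi) (hsupp i hc)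
  rw [Emap_monomial, hm, add_pow_char_pow]
  rw [Polynomial.map_monomial, ← Polynomial.C_mul_X_pow_eq_monomial,
    ← Polynomial.C_mul_X_pow_eq_monomial]
  rw [map_mul, map_pow]
  ring

lemma key_poly (p : ℕ) [Fact p.Prime] [CharP F p] (h : Polynomial F)
    (h0 : h.coeff 0 = 0) (hsupp : ∀ j : ℕ, (¬ ∃ m : ℕ, j = p ^ m) → h.coeff j = 0)
    (r n k : ℕ) :
    ((n + k).choose k : F) * (h ^ r).coeff (n + k)
      = ∑ m ∈ Finset.range (r + 1),
          (r.choose m : F) * (h ^ m).coeff n * (h ^ (r - m)).coeff k := by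
  have h1 : Emap F (h ^ r) = (h.map Polynomial.C + Polynomial.C h) ^ r := by
    rw [map_pow, Emap_additive p h h0 hsupp]
  have h2 := congrArg (fun q : Polynomial (Polynomial F) => (q.coeff n).coeff k) h1
  rw [Emap_coeff] at h2
  rw [h2, add_pow, Polynomial.finset_sum_coeff, Polynomial.finset_sum_coeff]
  refine Finset.sum_congr rfl fun m _ => ?_
  simp only [← Polynomial.C_eq_natCast, ← Polynomial.map_pow,
    ← map_pow (Polynomial.C : Polynomial F →+* Polynomial (Polynomial F)),
    Polynomial.coeff_mul_C, Polynomial.coeff_map, Polynomial.coeff_C_mul]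
  ring

lemma coeff_pow_congr {f g : PowerSeries F} {N : ℕ}
    (h : ∀ j, j < N → PowerSeries.coeff j f = PowerSeries.coeff j g) :
    ∀ (r : ℕ) (j : ℕ), j < N → PowerSeries.coeff j (f ^ r) = PowerSeries.coeff j (g ^ r) := by
  intro r
  induction r with
  | zero => intro j _; rfl
  | succ r ih =>
    intro j hj
    rw [pow_succ, pow_succ, PowerSeries.coeff_mul, PowerSeries.coeff_mul]
    refine Finset.sum_congr rfl fun q hq => ?_
    rw [Finset.HasAntidiagonal.mem_antidiagonal] at hq
    rw [ih q.1 (by omega), h q.2 (by omega)]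

lemma key_ps (p : ℕ) [Fact p.Prime] [CharP F p] (H : PowerSeries F)
    (h0 : PowerSeries.constantCoeff H = 0)
    (hsupp : ∀ j : ℕ, (¬ ∃ m : ℕ, j = p ^ m) → PowerSeries.coeff j H = 0)
    (r n k : ℕ) :
    ((n + k).choose k : F) * PowerSeries.coeff (n + k) (H ^ r)
      = ∑ m ∈ Finset.range (r + 1),
          (r.choose m : F) * PowerSeries.coeff n (H ^ m) *
            PowerSeries.coeff k (H ^ (r - m)) := by
  set N := n + k + 1 with hN
  set h : Polynomial F := PowerSeries.trunc N H with hh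
  have hcoeff : ∀ j, j < N →
      PowerSeries.coeff j ((h : PowerSeries F)) = PowerSeries.coeff j H := by
    intro j hj
    rw [Polynomial.coeff_coe, hh, PowerSeries.coeff_trunc, if_pos hj]
  have hpow : ∀ (r j : ℕ), j < N → PowerSeries.coeff j (H ^ r) = (h ^ r).coeff j := by
    intro r j hj
    rw [← coeff_pow_congr hcoeff r j hj, ← Polynomial.coe_pow, Polynomial.coeff_coe]
  have hc0 : h.coeff 0 = 0 := by
    rw [hh, PowerSeries.coeff_trunc, if_pos (by omega),
      PowerSeries.coeff_zero_eq_constantCoeff, h0]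
  have hcsupp : ∀ j : ℕ, (¬ ∃ m : ℕ, j = p ^ m) → h.coeff j = 0 := by
    intro j hj
    rw [hh, PowerSeries.coeff_trunc]
    split
    · exact hsupp j hj
    · rfl
  rw [hpow r (n + k) (by omega), key_poly p h hc0 hcsupp r n k]
  refine Finset.sum_congr rfl fun m _ => ?_
  rw [hpow m n (by omega), hpow (r - m) k (by omega)]

end PS

lemma na_coeff_pow_le {F : Type*} [NormedField F]
    (hna : ∀ x y : F, ‖x + y‖ ≤ max ‖x‖ ‖y‖) {G : PowerSeries F}
    (hG : ∀ n, ‖PowerSeries.coeff n G‖ ≤ 1) :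
    ∀ (m j : ℕ), ‖PowerSeries.coeff j (G ^ m)‖ ≤ 1 := by
  intro m
  induction m with
  | zero =>
    intro j
    rw [pow_zero]
    rcases eq_or_ne j 0 with h | h
    · simp [h]
    · simp [PowerSeries.coeff_one, h]
  | succ m ih =>
    intro j
    rw [pow_succ, PowerSeries.coeff_mul]
    refine na_sum_le hna zero_le_one _ _ fun q _ => ?_
    rw [norm_mul]
    have h1 := ih q.1
    have h2 := hG q.2
    nlinarith [norm_nonneg (PowerSeries.coeff q.1 (G ^ m)), norm_nonneg (PowerSeries.coeff q.2 G)]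

/-- Goss's duality theorem (the "if" direction): with
`v_k := ∑_m coeff_m(Hinv^k)·u_m`, the flow of `v` is conjugate to the flow of
`u` under the additive isomorphism generated by `H`:
`(Flow(u,P)) ∘ H = Flow(v, P ∘ H)` for every bounded `P`. -/
theorem goss_duality {F : Type*} [NormedField F] [CompleteSpace F]
    (hna : ∀ x y : F, ‖x + y‖ ≤ max ‖x‖ ‖y‖)
    (p : ℕ) (hp : p.Prime) (hchar : CharP F p)
    (H Hinv : PowerSeries F) (hH : IsAddGen p H) (hHinv : IsAddGen p Hinv)
    (hinv₁ : psComp Hinv H = PowerSeries.X) (hinv₂ : psComp H Hinv = PowerSeries.X)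
    (u : ℕ → F) (hu : Tendsto u atTop (nhds 0)) (hu0 : u 0 = 1)
    (P : PowerSeries F) (c : ℝ) (hc : 0 < c)
    (hP : ∀ n : ℕ, ‖PowerSeries.coeff n P‖ < c) :
    psComp (psFlow u P) H =
      psFlow (fun k => ∑' m : ℕ, PowerSeries.coeff m (Hinv ^ k) * u m)
        (psComp P H) := by
  obtain ⟨hH0, hHsupp, hHle, -⟩ := hH
  obtain ⟨hI0, hIsupp, hIle, -⟩ := hHinv
  haveI : Fact p.Prime := ⟨hp⟩
  have hnat : ∀ m : ℕ, ‖(m : F)‖ ≤ 1 := na_natCast_le hna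
  have hHpow : ∀ (s j : ℕ), ‖PowerSeries.coeff j (H ^ s)‖ ≤ 1 := na_coeff_pow_le hna hHle
  have hIpow : ∀ (s j : ℕ), ‖PowerSeries.coeff j (Hinv ^ s)‖ ≤ 1 := na_coeff_pow_le hna hIle
  set v : ℕ → F := fun k => ∑' m : ℕ, PowerSeries.coeff m (Hinv ^ k) * u m with hv
  -- norm control for v
  have hvle : ∀ (ε : ℝ), 0 ≤ ε → ∀ K : ℕ, (∀ m, K ≤ m → ‖u m‖ ≤ ε) →
      ∀ k, K ≤ k → ‖v k‖ ≤ ε := by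
    intro ε hε K hK k hk
    refine na_tsum_le hna hε _ fun m => ?_
    rcases lt_or_ge m k with hm | hm
    · rw [coeff_pow_eq_zero hI0 hm, zero_mul, norm_zero]; exact hε
    · rw [norm_mul]
      exact le_trans (mul_le_mul (hIpow k m) (hK m (le_trans hk hm)) (norm_nonneg _)
        zero_le_one) (by simp)
  have hv0 : Tendsto v atTop (nhds 0) := by
    rw [NormedAddCommGroup.tendsto_nhds_zero]
    intro ε hε
    obtain ⟨K, hK⟩ := eventually_atTop.mp
      ((NormedAddCommGroup.tendsto_nhds_zero.mp hu) (ε / 2) (by positivity))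
    filter_upwards [eventually_ge_atTop K] with k hk
    have := hvle (ε / 2) (by positivity) K (fun m hm => le_of_lt (hK m hm)) k hk
    linarith
  -- summability helpers
  have hsum_nat : ∀ f : ℕ → F, (∀ j, ‖f j‖ ≤ c * ‖u j‖) → Summable f := by
    intro f hf
    apply na_summable hna f
    rw [Nat.cofinite_eq_atTop]
    apply squeeze_zero_norm hf
    have h1 : Tendsto (fun j => ‖u j‖) atTop (nhds 0) := by
      simpa using hu.norm
    simpa using h1.const_mul c
  have hgrid : ∀ f : ℕ × ℕ → F,
      (∀ ε : ℝ, 0 < ε → ∃ K : ℕ, ∀ q : ℕ × ℕ, (K ≤ q.1 ∨ K ≤ q.2) → ‖f q‖ < ε) →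
      Summable f := by
    intro f hf
    apply na_summable hna f
    rw [NormedAddCommGroup.tendsto_nhds_zero]
    intro ε hε
    obtain ⟨K, hK⟩ := hf ε hε
    rw [eventually_cofinite]
    apply Set.Finite.subset ((Set.finite_Iio K).prod (Set.finite_Iio K))
    intro q hq
    simp only [Set.mem_setOf_eq, not_lt] at hq
    by_contra hq'
    simp only [Set.mem_prod, Set.mem_Iio, not_and_or, not_lt] at hq'
    exact absurd (hK q hq') (not_lt.mpr hq)
  ext n
  set Φ : ℕ → F := fun j => ∑ k ∈ Finset.range (n + 1),
      (((k + j).choose j : ℕ) : F) * PowerSeries.coeff (k + j) P *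
        PowerSeries.coeff n (H ^ k) with hΦ
  have hΦle : ∀ j, ‖Φ j‖ ≤ c := by
    intro j
    refine na_sum_le hna (le_of_lt hc) _ _ fun k _ => ?_
    rw [norm_mul, norm_mul]
    calc ‖(((k + j).choose j : ℕ) : F)‖ * ‖PowerSeries.coeff (k + j) P‖ *
          ‖PowerSeries.coeff n (H ^ k)‖
        ≤ 1 * c * 1 := by
          exact mul_le_mul
            (mul_le_mul (hnat _) (le_of_lt (hP _)) (norm_nonneg _) zero_le_one)
            (hHpow k n) (norm_nonneg _) (by positivity)
      _ = c := by ring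
  -- left-hand side
  have hL : PowerSeries.coeff n (psComp (psFlow u P) H) = ∑' j : ℕ, u j * Φ j := by
    rw [coeff_psComp]
    have h1 : ∀ k ∈ Finset.range (n + 1),
        PowerSeries.coeff k (psFlow u P) * PowerSeries.coeff n (H ^ k)
          = ∑' j : ℕ, (((k + j).choose j : ℕ) : F) * u j * PowerSeries.coeff (k + j) P *
              PowerSeries.coeff n (H ^ k) := by
      intro k _
      rw [psFlow, PowerSeries.coeff_mk, ← tsum_mul_right]
    rw [Finset.sum_congr rfl h1, ← Summable.tsum_finsetSum (fun k _ => ?_)]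
    · refine tsum_congr fun j => ?_
      rw [hΦ]
      simp only
      rw [Finset.mul_sum]
      refine Finset.sum_congr rfl fun k _ => ?_
      ring
    · apply hsum_nat
      intro j
      rw [norm_mul, norm_mul, norm_mul]
      calc ‖(((k + j).choose j : ℕ) : F)‖ * ‖u j‖ * ‖PowerSeries.coeff (k + j) P‖ *
            ‖PowerSeries.coeff n (H ^ k)‖
          ≤ 1 * ‖u j‖ * c * 1 := by
            exact mul_le_mul
              (mul_le_mul
                (mul_le_mul (hnat _) le_rfl (norm_nonneg _) zero_le_one)
                (le_of_lt (hP _)) (norm_nonneg _) (by positivity))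
              (hHpow k n) (norm_nonneg _) (by positivity)
        _ = c * ‖u j‖ := by ring
  -- claim A
  have hA : ∀ k : ℕ, (((n + k).choose k : ℕ) : F) * PowerSeries.coeff (n + k) (psComp P H)
      = ∑ s ∈ Finset.range (k + 1), PowerSeries.coeff k (H ^ s) * Φ s := by
    intro k
    rw [coeff_psComp, Finset.mul_sum]
    have step1 : ∀ r ∈ Finset.range (n + k + 1),
        (((n + k).choose k : ℕ) : F) *
            (PowerSeries.coeff r P * PowerSeries.coeff (n + k) (H ^ r))
          = ∑ m ∈ Finset.range (n + k + 1), PowerSeries.coeff r P *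
              ((r.choose m : F) * PowerSeries.coeff n (H ^ m) *
                PowerSeries.coeff k (H ^ (r - m))) := by
      intro r hr
      simp only [Finset.mem_range] at hr
      have hkey := key_ps p H hH0 hHsupp r n k
      calc (((n + k).choose k : ℕ) : F) *
            (PowerSeries.coeff r P * PowerSeries.coeff (n + k) (H ^ r))
          = PowerSeries.coeff r P *
              ((((n + k).choose k : ℕ) : F) * PowerSeries.coeff (n + k) (H ^ r)) := by ring
        _ = ∑ m ∈ Finset.range (r + 1), PowerSeries.coeff r P *
              ((r.choose m : F) * PowerSeries.coeff n (H ^ m) *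
                PowerSeries.coeff k (H ^ (r - m))) := by rw [hkey, Finset.mul_sum]
        _ = ∑ m ∈ Finset.range (n + k + 1), PowerSeries.coeff r P *
              ((r.choose m : F) * PowerSeries.coeff n (H ^ m) *
                PowerSeries.coeff k (H ^ (r - m))) := by
            refine Finset.sum_subset (Finset.range_subset_range.mpr (by omega)) ?_
            intro m hm hm'
            simp only [Finset.mem_range, not_lt] at hm'
            rw [Nat.choose_eq_zero_of_lt (by omega), Nat.cast_zero, zero_mul, zero_mul,
              mul_zero]
    rw [Finset.sum_congr rfl step1, Finset.sum_comm]
    have step2 : ∀ m ∈ Finset.range (n + k + 1),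
        ∑ r ∈ Finset.range (n + k + 1), (PowerSeries.coeff r P *
            ((r.choose m : F) * PowerSeries.coeff n (H ^ m) *
              PowerSeries.coeff k (H ^ (r - m))))
          = PowerSeries.coeff n (H ^ m) *
              ∑ r ∈ Finset.range (n + k + 1), PowerSeries.coeff r P * (r.choose m : F) *
                PowerSeries.coeff k (H ^ (r - m)) := by
      intro m _
      rw [Finset.mul_sum]
      exact Finset.sum_congr rfl fun r _ => by ring
    rw [Finset.sum_congr rfl step2]
    rw [← Finset.sum_subset (Finset.range_subset_range.mpr (show n + 1 ≤ n + k + 1 by omega))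
      (fun m hm hm' => by
        simp only [Finset.mem_range, not_lt] at hm'
        rw [coeff_pow_eq_zero hH0 (by omega), zero_mul])]
    have step3 : ∀ m ∈ Finset.range (n + 1),
        PowerSeries.coeff n (H ^ m) *
            ∑ r ∈ Finset.range (n + k + 1), PowerSeries.coeff r P * (r.choose m : F) *
              PowerSeries.coeff k (H ^ (r - m))
          = ∑ s ∈ Finset.range (k + 1), PowerSeries.coeff n (H ^ m) *
              (PowerSeries.coeff (m + s) P * (((m + s).choose m : ℕ) : F) *
                PowerSeries.coeff k (H ^ s)) := by
      intro m hm
      simp only [Finset.mem_range] at hm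
      rw [← Finset.mul_sum]
      congr 1
      rw [← Finset.sum_range_add_sum_Ico _ (show m ≤ n + k + 1 by omega)]
      rw [Finset.sum_eq_zero (fun r hr => by
        simp only [Finset.mem_range] at hr
        rw [Nat.choose_eq_zero_of_lt hr, Nat.cast_zero, mul_zero, zero_mul]), zero_add]
      rw [Finset.sum_Ico_eq_sum_range]
      have hred : ∀ s ∈ Finset.range (n + k + 1 - m),
          PowerSeries.coeff (m + s) P * ((m + s).choose m : F) *
              PowerSeries.coeff k (H ^ (m + s - m))
            = PowerSeries.coeff (m + s) P * ((m + s).choose m : F) *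
              PowerSeries.coeff k (H ^ s) := by
        intro s _
        rw [Nat.add_sub_cancel_left]
      rw [Finset.sum_congr rfl hred]
      rw [← Finset.sum_subset (Finset.range_subset_range.mpr (show k + 1 ≤ n + k + 1 - m by omega))
        (fun s hs hs' => by
          simp only [Finset.mem_range, not_lt] at hs'
          rw [coeff_pow_eq_zero hH0 (by omega), mul_zero])]
    rw [Finset.sum_congr rfl step3, Finset.sum_comm]
    refine Finset.sum_congr rfl fun s hs => ?_
    rw [hΦ]
    simp only
    rw [Finset.mul_sum]
    refine Finset.sum_congr rfl fun m _ => ?_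
    rw [Nat.choose_symm_add]
    ring
  -- claim C
  have hC : ∀ s : ℕ, ∑' k : ℕ, v k * PowerSeries.coeff k (H ^ s) = u s := by
    intro s
    have h1 : ∀ k : ℕ, v k * PowerSeries.coeff k (H ^ s)
        = ∑' m : ℕ, PowerSeries.coeff m (Hinv ^ k) * u m *
            PowerSeries.coeff k (H ^ s) := by
      intro k
      rw [hv]
      simp only
      rw [← tsum_mul_right]
    rw [tsum_congr h1]
    have hZ : Summable (Function.uncurry fun m k : ℕ =>
        PowerSeries.coeff m (Hinv ^ k) * u m * PowerSeries.coeff k (H ^ s)) := by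
      apply hgrid
      intro ε hε
      obtain ⟨K, hK⟩ := eventually_atTop.mp
        ((NormedAddCommGroup.tendsto_nhds_zero.mp hu) ε hε)
      refine ⟨K, fun q hq => ?_⟩
      have hle : ∀ m k : ℕ, K ≤ m →
          ‖PowerSeries.coeff m (Hinv ^ k) * u m * PowerSeries.coeff k (H ^ s)‖ < ε := by
        intro m k hm
        rw [norm_mul, norm_mul]
        calc ‖PowerSeries.coeff m (Hinv ^ k)‖ * ‖u m‖ * ‖PowerSeries.coeff k (H ^ s)‖
            ≤ 1 * ‖u m‖ * 1 := mul_le_mul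
              (mul_le_mul (hIpow k m) le_rfl (norm_nonneg _) zero_le_one)
              (hHpow s k) (norm_nonneg _) (by positivity)
          _ = ‖u m‖ := by ring
          _ < ε := hK m hm
      rcases hq with hq | hq
      · exact hle q.1 q.2 hq
      · rcases lt_or_ge q.1 q.2 with hlt | hge
        · simp only [Function.uncurry]
          rw [coeff_pow_eq_zero hI0 hlt, zero_mul, zero_mul, norm_zero]
          exact hε
        · exact hle q.1 q.2 (le_trans hq hge)
    rw [hZ.tsum_comm]
    have h2 : ∀ m : ℕ, (∑' k : ℕ, PowerSeries.coeff m (Hinv ^ k) * u m *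
        PowerSeries.coeff k (H ^ s)) = (if m = s then (1 : F) else 0) * u m := by
      intro m
      rw [tsum_eq_sum (s := Finset.range (m + 1)) (fun k hk => by
        simp only [Finset.mem_range, not_lt] at hk
        rw [coeff_pow_eq_zero hI0 (by omega), zero_mul, zero_mul])]
      have h3 : ∑ k ∈ Finset.range (m + 1), PowerSeries.coeff m (Hinv ^ k) * u m *
          PowerSeries.coeff k (H ^ s)
            = (∑ k ∈ Finset.range (m + 1), PowerSeries.coeff k (H ^ s) *
                PowerSeries.coeff m (Hinv ^ k)) * u m := by
        rw [Finset.sum_mul]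
        exact Finset.sum_congr rfl fun k _ => by ring
      rw [h3, ← coeff_psComp (H ^ s) Hinv m, psComp_pow hI0, hinv₂,
        PowerSeries.coeff_X_pow]
    rw [tsum_congr h2]
    rw [tsum_eq_single s (fun m hm => by rw [if_neg hm, zero_mul])]
    rw [if_pos rfl, one_mul]
  -- assemble
  rw [hL, psFlow, PowerSeries.coeff_mk]
  have hR1 : ∀ k : ℕ, (((n + k).choose k : ℕ) : F) * v k *
      PowerSeries.coeff (n + k) (psComp P H)
        = ∑' s : ℕ, v k * (PowerSeries.coeff k (H ^ s) * Φ s) := by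
    intro k
    rw [tsum_eq_sum (s := Finset.range (k + 1)) (fun s hs => by
      simp only [Finset.mem_range, not_lt] at hs
      rw [coeff_pow_eq_zero hH0 (by omega), zero_mul, mul_zero])]
    rw [← Finset.mul_sum, ← hA k]
    ring
  have hW : Summable (Function.uncurry fun s k : ℕ =>
      v k * (PowerSeries.coeff k (H ^ s) * Φ s)) := by
    apply hgrid
    intro ε hε
    obtain ⟨K, hK⟩ := eventually_atTop.mp
      ((NormedAddCommGroup.tendsto_nhds_zero.mp hv0) (ε / (c + 1))
        (by positivity))
    refine ⟨K, fun q hq => ?_⟩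
    have hle : ∀ s k : ℕ, K ≤ k →
        ‖v k * (PowerSeries.coeff k (H ^ s) * Φ s)‖ < ε := by
      intro s k hk
      rw [norm_mul, norm_mul]
      have hb : ‖v k‖ * (‖PowerSeries.coeff k (H ^ s)‖ * ‖Φ s‖) ≤ ‖v k‖ * (c + 1) := by
        apply mul_le_mul le_rfl _ (by positivity) (norm_nonneg _)
        calc ‖PowerSeries.coeff k (H ^ s)‖ * ‖Φ s‖ ≤ 1 * c := mul_le_mul
              (hHpow s k) (hΦle s) (norm_nonneg _) zero_le_one
          _ ≤ c + 1 := by linarith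
      have hv' : ‖v k‖ < ε / (c + 1) := hK k hk
      calc ‖v k‖ * (‖PowerSeries.coeff k (H ^ s)‖ * ‖Φ s‖) ≤ ‖v k‖ * (c + 1) := hb
        _ < (ε / (c + 1)) * (c + 1) := by
            apply mul_lt_mul_of_pos_right hv' (by positivity)
        _ = ε := by field_simp
    rcases hq with hq | hq
    · rcases lt_or_ge q.2 q.1 with hlt | hge
      · simp only [Function.uncurry]
        rw [coeff_pow_eq_zero hH0 hlt, zero_mul, mul_zero, norm_zero]
        exact hε
      · exact hle q.1 q.2 (le_trans hq hge)
    · exact hle q.1 q.2 hq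
  calc ∑' j : ℕ, u j * Φ j
      = ∑' s : ℕ, (∑' k : ℕ, v k * PowerSeries.coeff k (H ^ s)) * Φ s := by
        refine tsum_congr fun s => ?_
        rw [hC s]
    _ = ∑' s : ℕ, ∑' k : ℕ, v k * (PowerSeries.coeff k (H ^ s) * Φ s) := by
        refine tsum_congr fun s => ?_
        rw [← tsum_mul_right]
        exact tsum_congr fun k => by ring
    _ = ∑' k : ℕ, ∑' s : ℕ, v k * (PowerSeries.coeff k (H ^ s) * Φ s) :=
        (hW.tsum_comm).symm
    _ = ∑' k : ℕ, (((n + k).choose k : ℕ) : F) * v k *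
          PowerSeries.coeff (n + k) (psComp P H) :=
        tsum_congr fun k => (hR1 k).symm
end

section
/- Criterion answering Goss's question: let F be a field of characteristic p > 0, complete with respect to a non-Archimedean norm. Let H be an additive generator with a two-sided composition inverse Hinv which is also an additive generator. Let u : ℕ → F be a null sequence with u_0 = 1, define v_k := ∑_{m≥0} (coeff_m(Hinv^k))·u_m, and assume ‖v_1‖ < 1. Then the naive (geometric) flow of v_1 equals the flow of v — i.e., Flow((v_1^k)_{k≥0}, P) = Flow(v, P) for every bounded P ∈ F⟦T⟧ — if and only if u is geometric, i.e., u_k = u_1^k for all k ≥ 0. -/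
open Filter

section GossAux

open PowerSeries Finset

/-! ### Algebraic lemmas about `psComp` -/

variable {F : Type*} [Field F]

private lemma gq_coeff_pow_eq_zero_of_lt {a : PowerSeries F} (ha : constantCoeff a = 0)
    {n i : ℕ} (h : n < i) : coeff n (a ^ i) = 0 := by
  have hdvd : (X : PowerSeries F) ^ i ∣ a ^ i :=
    pow_dvd_pow_of_dvd (X_dvd_iff.mpr ha) i
  exact (X_pow_dvd_iff.mp hdvd) n h

private lemma gq_coeff_psComp (P a : PowerSeries F) (n : ℕ) :
    coeff n (psComp P a) = ∑ k ∈ range (n + 1), coeff k P * coeff n (a ^ k) := by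
  simp [psComp, coeff_mk]

private lemma gq_coeff_eval₂ {a : PowerSeries F} (ha : constantCoeff a = 0)
    (f : Polynomial F) (n : ℕ) :
    coeff n (Polynomial.eval₂ (C (R := F)) a f)
      = ∑ i ∈ range (n + 1), f.coeff i * coeff n (a ^ i) := by
  set N := max (f.natDegree + 1) (n + 1) with hN
  rw [Polynomial.eval₂_eq_sum_range' (C (R := F))
    (lt_of_lt_of_le (Nat.lt_succ_self _) (le_max_left _ _)) a, map_sum]
  have hsub : range (n + 1) ⊆ range N := range_subset_range.mpr (le_max_right _ _)
  rw [← Finset.sum_subset hsub]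
  · exact Finset.sum_congr rfl fun i _ => by rw [coeff_C_mul]
  · intro i hi hni
    have : n < i := by
      simp only [mem_range] at hi hni; omega
    rw [coeff_C_mul, gq_coeff_pow_eq_zero_of_lt ha this, mul_zero]

private lemma gq_coeff_eval₂_trunc {a : PowerSeries F} (ha : constantCoeff a = 0)
    (P : PowerSeries F) {c n : ℕ} (hcn : c ≤ n) :
    coeff c (Polynomial.eval₂ (C (R := F)) a (trunc (n + 1) P)) = coeff c (psComp P a) := by
  rw [gq_coeff_eval₂ ha, gq_coeff_psComp]
  refine Finset.sum_congr rfl fun i hi => ?_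
  rw [coeff_trunc]
  have : i < n + 1 := by simp only [mem_range] at hi; omega
  rw [if_pos this]

private lemma gq_psComp_mul {a : PowerSeries F} (ha : constantCoeff a = 0)
    (P Q : PowerSeries F) : psComp (P * Q) a = psComp P a * psComp Q a := by
  ext n
  have key : coeff n (psComp (P * Q) a)
      = coeff n (Polynomial.eval₂ (C (R := F)) a (trunc (n + 1) P * trunc (n + 1) Q)) := by
    rw [gq_coeff_psComp, gq_coeff_eval₂ ha]
    refine Finset.sum_congr rfl fun k hk => ?_
    have hkn : k ≤ n := by simp only [mem_range] at hk; omega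
    congr 1
    rw [PowerSeries.coeff_mul, Polynomial.coeff_mul]
    refine Finset.sum_congr rfl fun x hx => ?_
    have hx' := Finset.HasAntidiagonal.mem_antidiagonal.mp hx
    rw [coeff_trunc, coeff_trunc, if_pos (by omega), if_pos (by omega)]
  rw [key, Polynomial.eval₂_mul, PowerSeries.coeff_mul, PowerSeries.coeff_mul]
  refine Finset.sum_congr rfl fun x hx => ?_
  have hx' := Finset.HasAntidiagonal.mem_antidiagonal.mp hx
  rw [gq_coeff_eval₂_trunc ha P (by omega), gq_coeff_eval₂_trunc ha Q (by omega)]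

private lemma gq_psComp_one {a : PowerSeries F} : psComp (1 : PowerSeries F) a = 1 := by
  ext n
  rw [gq_coeff_psComp, Finset.sum_eq_single 0]
  · simp
  · intro k hk hk0
    rw [PowerSeries.coeff_one, if_neg hk0, zero_mul]
  · simp

private lemma gq_psComp_pow {a : PowerSeries F} (ha : constantCoeff a = 0)
    (P : PowerSeries F) (j : ℕ) : psComp (P ^ j) a = (psComp P a) ^ j := by
  induction j with
  | zero => simpa using gq_psComp_one
  | succ j ih => rw [pow_succ, gq_psComp_mul ha, ih, pow_succ]

end GossAux

section GossNorm

open PowerSeries Finset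

variable {F : Type*} [NormedField F]

private lemma gq_coeff_mul_norm_le (hna : ∀ x y : F, ‖x + y‖ ≤ max ‖x‖ ‖y‖)
    {P Q : PowerSeries F} (hP : ∀ n, ‖coeff n P‖ ≤ 1) (hQ : ∀ n, ‖coeff n Q‖ ≤ 1)
    (n : ℕ) : ‖coeff n (P * Q)‖ ≤ 1 := by
  haveI : IsUltrametricDist F := IsUltrametricDist.isUltrametricDist_of_isNonarchimedean_norm hna
  rw [PowerSeries.coeff_mul]
  refine IsUltrametricDist.norm_sum_le_of_forall_le_of_nonneg zero_le_one fun i _ => ?_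
  calc ‖coeff i.1 P * coeff i.2 Q‖ ≤ ‖coeff i.1 P‖ * ‖coeff i.2 Q‖ := norm_mul_le _ _
  _ ≤ 1 := mul_le_one₀ (hP _) (norm_nonneg _) (hQ _)

private lemma gq_coeff_pow_norm_le (hna : ∀ x y : F, ‖x + y‖ ≤ max ‖x‖ ‖y‖)
    {P : PowerSeries F} (hP : ∀ n, ‖coeff n P‖ ≤ 1) (k : ℕ) (n : ℕ) :
    ‖coeff n (P ^ k)‖ ≤ 1 := by
  induction k generalizing n with
  | zero => simp only [pow_zero, PowerSeries.coeff_one]; split <;> simp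
  | succ k ih => rw [pow_succ]; exact gq_coeff_mul_norm_le hna ih hP n

end GossNorm

section GossEval

open PowerSeries Finset

variable {F : Type*} [NormedField F] [CompleteSpace F]

/-- Evaluation of a power series at a point. -/
private noncomputable def psEv (x : F) (P : PowerSeries F) : F := ∑' n : ℕ, coeff n P * x ^ n

omit [CompleteSpace F] in
private lemma gq_psEv_summable_norm {x : F} (hx : ‖x‖ < 1) {P : PowerSeries F}
    (hP : ∀ n, ‖coeff n P‖ ≤ 1) : Summable fun n : ℕ => ‖coeff n P * x ^ n‖ := by
  refine Summable.of_nonneg_of_le (fun _ => norm_nonneg _) (fun n => ?_)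
    (summable_geometric_of_lt_one (norm_nonneg x) hx)
  calc ‖coeff n P * x ^ n‖ = ‖coeff n P‖ * ‖x‖ ^ n := by rw [norm_mul, norm_pow]
  _ ≤ ‖x‖ ^ n := mul_le_of_le_one_left (pow_nonneg (norm_nonneg x) n) (hP n)

private lemma gq_psEv_mul {x : F} (hx : ‖x‖ < 1) {P Q : PowerSeries F}
    (hP : ∀ n, ‖coeff n P‖ ≤ 1) (hQ : ∀ n, ‖coeff n Q‖ ≤ 1) :
    psEv x (P * Q) = psEv x P * psEv x Q := by
  rw [psEv, psEv, psEv,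
    tsum_mul_tsum_eq_tsum_sum_antidiagonal_of_summable_norm
      (gq_psEv_summable_norm hx hP) (gq_psEv_summable_norm hx hQ)]
  refine tsum_congr fun n => ?_
  rw [PowerSeries.coeff_mul, Finset.sum_mul]
  refine Finset.sum_congr rfl fun i hi => ?_
  have hi' := Finset.HasAntidiagonal.mem_antidiagonal.mp hi
  rw [← hi', pow_add]; ring

omit [CompleteSpace F] in
private lemma gq_psEv_one (x : F) : psEv x (1 : PowerSeries F) = 1 := by
  rw [psEv, tsum_eq_single 0]
  · simp
  · intro n hn
    rw [PowerSeries.coeff_one, if_neg hn, zero_mul]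

private lemma gq_psEv_pow (hna : ∀ x y : F, ‖x + y‖ ≤ max ‖x‖ ‖y‖) {x : F} (hx : ‖x‖ < 1)
    {P : PowerSeries F} (hP : ∀ n, ‖coeff n P‖ ≤ 1) (j : ℕ) :
    psEv x (P ^ j) = (psEv x P) ^ j := by
  induction j with
  | zero => simpa using gq_psEv_one x
  | succ j ih =>
      rw [pow_succ, gq_psEv_mul hx (gq_coeff_pow_norm_le hna hP j) hP, ih, pow_succ]

set_option maxHeartbeats 1000000 in
/-- Inversion: the original sequence is recovered from the transformed sequence. -/
private lemma gq_u_eq_tsum (hna : ∀ x y : F, ‖x + y‖ ≤ max ‖x‖ ‖y‖)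
    (H Hinv : PowerSeries F)
    (hH3 : ∀ n, ‖coeff n H‖ ≤ 1) (hHinv3 : ∀ n, ‖coeff n Hinv‖ ≤ 1)
    (hHinv0 : constantCoeff Hinv = 0)
    (hinv₂ : psComp H Hinv = X)
    (u : ℕ → F) (hu : Tendsto u atTop (nhds 0)) (v : ℕ → F)
    (hv : ∀ k : ℕ, v k = ∑' m : ℕ, coeff m (Hinv ^ k) * u m) (j : ℕ) :
    u j = ∑' k : ℕ, coeff k (H ^ j) * v k := by
  haveI : IsUltrametricDist F := IsUltrametricDist.isUltrametricDist_of_isNonarchimedean_norm hna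
  set g : ℕ × ℕ → F := fun x => coeff x.1 (H ^ j) * (coeff x.2 (Hinv ^ x.1) * u x.2) with hg
  have hgbd : ∀ x : ℕ × ℕ, ‖g x‖ ≤ ‖u x.2‖ := by
    intro x
    calc ‖g x‖ ≤ ‖coeff x.1 (H ^ j)‖ * ‖coeff x.2 (Hinv ^ x.1) * u x.2‖ := norm_mul_le _ _
    _ ≤ 1 * ‖coeff x.2 (Hinv ^ x.1) * u x.2‖ := by
        gcongr; exact gq_coeff_pow_norm_le hna hH3 j _
    _ = ‖coeff x.2 (Hinv ^ x.1) * u x.2‖ := one_mul _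
    _ ≤ ‖coeff x.2 (Hinv ^ x.1)‖ * ‖u x.2‖ := norm_mul_le _ _
    _ ≤ 1 * ‖u x.2‖ := by gcongr; exact gq_coeff_pow_norm_le hna hHinv3 x.1 _
    _ = ‖u x.2‖ := one_mul _
  have hg0 : ∀ x : ℕ × ℕ, x.2 < x.1 → g x = 0 := by
    intro x h
    simp [hg, gq_coeff_pow_eq_zero_of_lt hHinv0 h]
  have hsum : Summable g := by
    apply NonarchimedeanAddGroup.summable_of_tendsto_cofinite_zero
    rw [Metric.tendsto_nhds]
    intro ε hε
    rw [Filter.eventually_cofinite]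
    obtain ⟨N, hN⟩ := Metric.tendsto_atTop.mp hu ε hε
    refine Set.Finite.subset ((Set.finite_Iio N).prod (Set.finite_Iio N)) ?_
    intro x hx
    simp only [Set.mem_setOf_eq, dist_zero_right, not_lt] at hx
    have hx2 : x.2 < N := by
      by_contra h
      have := hN x.2 (le_of_not_gt h)
      rw [dist_zero_right] at this
      exact absurd (lt_of_le_of_lt (le_trans hx (hgbd x)) this) (lt_irrefl ε)
    have hx1 : x.1 ≤ x.2 := by
      by_contra h
      rw [hg0 x (lt_of_not_ge h), norm_zero] at hx
      exact absurd (lt_of_le_of_lt hx hε) (lt_irrefl ε)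
    exact Set.mem_prod.mpr ⟨lt_of_le_of_lt hx1 hx2, hx2⟩
  have hrow : ∀ k : ℕ, Summable fun m => g (k, m) := by
    intro k
    show Summable fun m => coeff k (H ^ j) * (coeff m (Hinv ^ k) * u m)
    apply Summable.mul_left
    apply NonarchimedeanAddGroup.summable_of_tendsto_cofinite_zero
    rw [Nat.cofinite_eq_atTop]
    apply squeeze_zero_norm (fun m => ?_) (tendsto_zero_iff_norm_tendsto_zero.mp hu)
    calc ‖coeff m (Hinv ^ k) * u m‖ ≤ ‖coeff m (Hinv ^ k)‖ * ‖u m‖ := norm_mul_le _ _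
    _ ≤ 1 * ‖u m‖ := by gcongr; exact gq_coeff_pow_norm_le hna hHinv3 k _
    _ = ‖u m‖ := one_mul _
  have hcol : ∀ m : ℕ, Summable fun k => g (k, m) := by
    intro m
    apply summable_of_ne_finset_zero (s := Finset.range (m + 1))
    intro k hk
    exact hg0 (k, m) (by simp only [mem_range, not_lt] at hk; omega)
  have h2 : ∀ k : ℕ, ∑' m, g (k, m) = coeff k (H ^ j) * v k := by
    intro k
    rw [hv k, ← tsum_mul_left]
  have h3 : ∀ m : ℕ, ∑' k, g (k, m) = coeff m ((X : PowerSeries F) ^ j) * u m := by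
    intro m
    rw [tsum_eq_sum (s := Finset.range (m + 1))
      (fun k hk => hg0 (k, m) (by simp only [mem_range, not_lt] at hk; omega))]
    have step : ∑ k ∈ Finset.range (m + 1), g (k, m)
        = (∑ k ∈ Finset.range (m + 1), coeff k (H ^ j) * coeff m (Hinv ^ k)) * u m := by
      rw [Finset.sum_mul]
      exact Finset.sum_congr rfl fun k _ => (mul_assoc _ _ _).symm
    rw [step, ← gq_coeff_psComp, gq_psComp_pow hHinv0, hinv₂]
  have hcomm : ∑' k, ∑' m, g (k, m) = ∑' m, ∑' k, g (k, m) := by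
    have huncurry : Summable (Function.uncurry fun k m => g (k, m)) := hsum
    exact (Summable.tsum_comm' huncurry hrow hcol).symm
  calc u j = ∑' m, coeff m ((X : PowerSeries F) ^ j) * u m := by
        rw [tsum_eq_single j]
        · rw [PowerSeries.coeff_X_pow, if_pos rfl, one_mul]
        · intro m hm
          rw [PowerSeries.coeff_X_pow, if_neg hm, zero_mul]
    _ = ∑' m, ∑' k, g (k, m) := tsum_congr fun m => (h3 m).symm
    _ = ∑' k, ∑' m, g (k, m) := hcomm.symm
    _ = ∑' k, coeff k (H ^ j) * v k := tsum_congr h2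

end GossEval

/-- Criterion answering Goss's question: the naive (geometric) flow of `v₁`
equals the flow of the dual sequence `v` on all bounded power series if and
only if the original sequence `u` is geometric, i.e. `u_k = u_1^k`. -/
theorem goss_question_criterion {F : Type*} [NormedField F] [CompleteSpace F]
    (hna : ∀ x y : F, ‖x + y‖ ≤ max ‖x‖ ‖y‖)
    (p : ℕ) (hp : p.Prime) (hchar : CharP F p)
    (H Hinv : PowerSeries F) (hH : IsAddGen p H) (hHinv : IsAddGen p Hinv)
    (hinv₁ : psComp Hinv H = PowerSeries.X) (hinv₂ : psComp H Hinv = PowerSeries.X)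
    (u : ℕ → F) (hu : Tendsto u atTop (nhds 0)) (hu0 : u 0 = 1)
    (v : ℕ → F)
    (hv : ∀ k : ℕ, v k = ∑' m : ℕ, PowerSeries.coeff m (Hinv ^ k) * u m)
    (hv1 : ‖v 1‖ < 1) :
    (∀ P : PowerSeries F,
        (∃ c : ℝ, 0 < c ∧ ∀ n : ℕ, ‖PowerSeries.coeff n P‖ < c) →
        psFlow (fun k => v 1 ^ k) P = psFlow v P) ↔
      (∀ k : ℕ, u k = u 1 ^ k) := by
  obtain ⟨hH0, -, hH3, -⟩ := hH
  obtain ⟨hHinv0, -, hHinv3, -⟩ := hHinv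
  constructor
  · intro hflow
    -- first, `v` is geometric
    have hvg : ∀ N : ℕ, v N = v 1 ^ N := by
      intro N
      have hb : ∃ c : ℝ, 0 < c ∧
          ∀ n : ℕ, ‖PowerSeries.coeff n ((PowerSeries.X : PowerSeries F) ^ N)‖ < c := by
        refine ⟨2, two_pos, fun n => ?_⟩
        rw [PowerSeries.coeff_X_pow]
        split <;> simp <;> norm_num
      have h0 := congrArg (fun Q => PowerSeries.coeff 0 Q)
        (hflow ((PowerSeries.X : PowerSeries F) ^ N) hb)
      simp only [psFlow, PowerSeries.coeff_mk] at h0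
      have e1 : ∀ w : ℕ → F,
          (∑' k : ℕ, ((0 + k).choose k : F) * w k *
            PowerSeries.coeff (0 + k) ((PowerSeries.X : PowerSeries F) ^ N)) = w N := by
        intro w
        rw [tsum_eq_single N]
        · simp [PowerSeries.coeff_X_pow]
        · intro k hk
          rw [zero_add, PowerSeries.coeff_X_pow, if_neg hk, mul_zero]
      rw [e1, e1] at h0
      exact h0.symm
    have huk : ∀ k : ℕ, u k = psEv (v 1) H ^ k := by
      intro k
      rw [gq_u_eq_tsum hna H Hinv hH3 hHinv3 hHinv0 hinv₂ u hu v hv k]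
      have he : ∑' k' : ℕ, PowerSeries.coeff k' (H ^ k) * v k' = psEv (v 1) (H ^ k) := by
        rw [psEv]
        exact tsum_congr fun k' => by rw [hvg k']
      rw [he, gq_psEv_pow hna hv1 hH3]
    have hu1 : u 1 = psEv (v 1) H := by rw [huk 1, pow_one]
    intro k
    rw [huk k, hu1]
  · intro hgeo
    have hu1lt : ‖u 1‖ < 1 := by
      by_contra h
      push_neg at h
      obtain ⟨N, hN⟩ := Metric.tendsto_atTop.mp hu 1 one_pos
      have h1 := hN N le_rfl
      rw [dist_zero_right, hgeo N, norm_pow] at h1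
      exact absurd h1 (not_lt.mpr (one_le_pow₀ h))
    have hvk : ∀ k : ℕ, v k = v 1 ^ k := by
      have hev1 : v 1 = psEv (u 1) Hinv := by
        rw [hv 1, psEv]
        exact tsum_congr fun m => by rw [pow_one, hgeo m]
      intro k
      rw [hv k]
      have he : ∑' m : ℕ, PowerSeries.coeff m (Hinv ^ k) * u m = psEv (u 1) (Hinv ^ k) := by
        rw [psEv]
        exact tsum_congr fun m => by rw [hgeo m]
      rw [he, gq_psEv_pow hna hu1lt hHinv3, hev1]
    intro P _
    have hfun : (fun k => v 1 ^ k) = v := funext fun k => (hvk k).symm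
    rw [hfun]
end

section
/- Inversion of the dual moment sequence: let F be a field complete with respect to a non-Archimedean norm, and let H, Hinv ∈ F⟦T⟧ each have zero constant coefficient and all coefficients of norm ≤ 1, with Hinv∘H = T = H∘Hinv under power series substitution. Let u : ℕ → F be a null sequence and set v_k := ∑_{m≥0} (coeff_m(Hinv^k))·u_m. Then for every k ≥ 0 the family m ↦ (coeff_m(H^k))·v_m is summable and u_k = ∑_{m≥0} (coeff_m(H^k))·v_m. -/
open Filter

section Aux

variable {F : Type*} [Field F]

lemma coeff_pow_eq_zero_aux {G : PowerSeries F} (hG : PowerSeries.constantCoeff G = 0)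
    {k n : ℕ} (h : n < k) : PowerSeries.coeff n (G ^ k) = 0 := by
  have hdvd : (PowerSeries.X : PowerSeries F) ^ k ∣ G ^ k :=
    pow_dvd_pow_of_dvd (PowerSeries.X_dvd_iff.mpr hG) k
  exact (PowerSeries.X_pow_dvd_iff.mp hdvd) n h

lemma psComp_mul_aux (G : PowerSeries F) (hG : PowerSeries.constantCoeff G = 0)
    (P Q : PowerSeries F) :
    psComp (P * Q) G = psComp P G * psComp Q G := by
  classical
  ext n
  have hz : ∀ {i a : ℕ}, a < i → PowerSeries.coeff a (G ^ i) = 0 :=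
    fun h => coeff_pow_eq_zero_aux hG h
  rw [PowerSeries.coeff_mul]
  simp only [psComp, PowerSeries.coeff_mk]
  -- common target:
  -- S := ∑ i ∈ range (n+1), ∑ j ∈ range (n+1),
  --        coeff i P * coeff j Q * coeff n (G^i * G^j)
  have hRHS : ∑ q ∈ Finset.HasAntidiagonal.antidiagonal n,
      (∑ i ∈ Finset.range (q.1 + 1),
          PowerSeries.coeff i P * PowerSeries.coeff q.1 (G ^ i)) *
      (∑ j ∈ Finset.range (q.2 + 1),
          PowerSeries.coeff j Q * PowerSeries.coeff q.2 (G ^ j)) =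
      ∑ i ∈ Finset.range (n + 1), ∑ j ∈ Finset.range (n + 1),
        PowerSeries.coeff i P * PowerSeries.coeff j Q *
          PowerSeries.coeff n (G ^ i * G ^ j) := by
    have step : ∀ q ∈ Finset.HasAntidiagonal.antidiagonal n,
        (∑ i ∈ Finset.range (q.1 + 1),
            PowerSeries.coeff i P * PowerSeries.coeff q.1 (G ^ i)) *
        (∑ j ∈ Finset.range (q.2 + 1),
            PowerSeries.coeff j Q * PowerSeries.coeff q.2 (G ^ j)) =
        ∑ i ∈ Finset.range (n + 1), ∑ j ∈ Finset.range (n + 1),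
          PowerSeries.coeff i P * PowerSeries.coeff j Q *
            (PowerSeries.coeff q.1 (G ^ i) * PowerSeries.coeff q.2 (G ^ j)) := by
      intro q hq
      have hq' : q.1 + q.2 = n := Finset.HasAntidiagonal.mem_antidiagonal.mp hq
      have h1 : (∑ i ∈ Finset.range (q.1 + 1),
          PowerSeries.coeff i P * PowerSeries.coeff q.1 (G ^ i)) =
          ∑ i ∈ Finset.range (n + 1),
            PowerSeries.coeff i P * PowerSeries.coeff q.1 (G ^ i) := by
        apply Finset.sum_subset (Finset.range_subset_range.mpr (by omega))
        intro i hi hi2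
        have : q.1 < i := by
          simp only [Finset.mem_range] at hi hi2; omega
        rw [hz this, mul_zero]
      have h2 : (∑ j ∈ Finset.range (q.2 + 1),
          PowerSeries.coeff j Q * PowerSeries.coeff q.2 (G ^ j)) =
          ∑ j ∈ Finset.range (n + 1),
            PowerSeries.coeff j Q * PowerSeries.coeff q.2 (G ^ j) := by
        apply Finset.sum_subset (Finset.range_subset_range.mpr (by omega))
        intro j hj hj2
        have : q.2 < j := by
          simp only [Finset.mem_range] at hj hj2; omega
        rw [hz this, mul_zero]
      rw [h1, h2, Finset.sum_mul_sum]
      exact Finset.sum_congr rfl fun i _ => Finset.sum_congr rfl fun j _ => by ring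
    rw [Finset.sum_congr rfl step, Finset.sum_comm]
    refine Finset.sum_congr rfl fun i _ => ?_
    rw [Finset.sum_comm]
    refine Finset.sum_congr rfl fun j _ => ?_
    rw [← Finset.mul_sum, PowerSeries.coeff_mul]
  rw [hRHS]
  -- now the LHS
  have hLHS : ∑ k ∈ Finset.range (n + 1),
      (PowerSeries.coeff k (P * Q)) * PowerSeries.coeff n (G ^ k) =
      ∑ i ∈ Finset.range (n + 1), ∑ j ∈ Finset.range (n + 1),
        PowerSeries.coeff i P * PowerSeries.coeff j Q *
          PowerSeries.coeff n (G ^ i * G ^ j) := by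
    have e1 : ∀ k ∈ Finset.range (n + 1),
        (PowerSeries.coeff k (P * Q)) * PowerSeries.coeff n (G ^ k) =
        ∑ p ∈ Finset.HasAntidiagonal.antidiagonal k,
          PowerSeries.coeff p.1 P * PowerSeries.coeff p.2 Q *
            PowerSeries.coeff n (G ^ p.1 * G ^ p.2) := by
      intro k hk
      rw [PowerSeries.coeff_mul, Finset.sum_mul]
      refine Finset.sum_congr rfl fun p hp => ?_
      have hp' : p.1 + p.2 = k := Finset.HasAntidiagonal.mem_antidiagonal.mp hp
      rw [← pow_add, hp']
    rw [Finset.sum_congr rfl e1, Finset.sum_sigma']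
    -- reindex the sigma set onto the filtered product
    rw [show ∑ i ∈ Finset.range (n + 1), ∑ j ∈ Finset.range (n + 1),
        PowerSeries.coeff i P * PowerSeries.coeff j Q *
          PowerSeries.coeff n (G ^ i * G ^ j) =
        ∑ p ∈ Finset.range (n + 1) ×ˢ Finset.range (n + 1),
          PowerSeries.coeff p.1 P * PowerSeries.coeff p.2 Q *
            PowerSeries.coeff n (G ^ p.1 * G ^ p.2) from
      (Finset.sum_product' (Finset.range (n + 1)) (Finset.range (n + 1))
        (fun i j => PowerSeries.coeff i P *
          PowerSeries.coeff j Q * PowerSeries.coeff n (G ^ i * G ^ j))).symm]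
    rw [show ∑ p ∈ Finset.range (n + 1) ×ˢ Finset.range (n + 1),
          PowerSeries.coeff p.1 P * PowerSeries.coeff p.2 Q *
            PowerSeries.coeff n (G ^ p.1 * G ^ p.2) =
        ∑ p ∈ (Finset.range (n + 1) ×ˢ Finset.range (n + 1)).filter
            (fun p => p.1 + p.2 ≤ n),
          PowerSeries.coeff p.1 P * PowerSeries.coeff p.2 Q *
            PowerSeries.coeff n (G ^ p.1 * G ^ p.2) from ?_]
    · -- bijection between sigma set and filtered product
      refine Finset.sum_nbij' (fun x => x.2) (fun p => ⟨p.1 + p.2, p⟩) ?_ ?_ ?_ ?_ ?_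
      · rintro ⟨k, p⟩ hx
        simp only [Finset.mem_sigma, Finset.mem_range, Finset.HasAntidiagonal.mem_antidiagonal] at hx
        simp only [Finset.mem_filter, Finset.mem_product, Finset.mem_range]
        omega
      · rintro p hp
        simp only [Finset.mem_filter, Finset.mem_product, Finset.mem_range] at hp
        simp only [Finset.mem_sigma, Finset.mem_range, Finset.HasAntidiagonal.mem_antidiagonal]
        exact ⟨by omega, trivial⟩
      · rintro ⟨k, p⟩ hx
        simp only [Finset.mem_sigma, Finset.mem_range, Finset.HasAntidiagonal.mem_antidiagonal] at hx
        simp [hx.2]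
      · rintro p _; rfl
      · rintro ⟨k, p⟩ _; rfl
    · symm
      apply Finset.sum_subset (Finset.filter_subset _ _)
      intro p hp hp2
      simp only [Finset.mem_filter, Finset.mem_product, Finset.mem_range] at hp hp2
      have : n < p.1 + p.2 := by omega
      rw [← pow_add, hz this, mul_zero]
  rw [hLHS]

lemma psComp_pow_aux (G P : PowerSeries F) (hG : PowerSeries.constantCoeff G = 0)
    (k : ℕ) : psComp (P ^ k) G = (psComp P G) ^ k := by
  induction k with
  | zero =>
      ext n
      simp only [pow_zero, psComp, PowerSeries.coeff_mk]
      rw [Finset.sum_eq_single 0]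
      · simp
      · intro b _ hb
        rw [PowerSeries.coeff_one]
        simp [hb]
      · intro h; simp at h
  | succ k ih =>
      rw [pow_succ, pow_succ, psComp_mul_aux G hG, ih]

end Aux

/-- Inversion of the dual moment sequence: if `v_k = ∑_m coeff_m(Hinv^k)·u_m`,
then `u_k = ∑_m coeff_m(H^k)·v_m`, these families being summable. -/
theorem dual_moment_inversion {F : Type*} [NormedField F] [CompleteSpace F]
    (hna : ∀ x y : F, ‖x + y‖ ≤ max ‖x‖ ‖y‖)
    (H Hinv : PowerSeries F)
    (hH0 : PowerSeries.constantCoeff H = 0)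
    (hHinv0 : PowerSeries.constantCoeff Hinv = 0)
    (hH1 : ∀ n : ℕ, ‖PowerSeries.coeff n H‖ ≤ 1)
    (hHinv1 : ∀ n : ℕ, ‖PowerSeries.coeff n Hinv‖ ≤ 1)
    (hinv₁ : psComp Hinv H = PowerSeries.X) (hinv₂ : psComp H Hinv = PowerSeries.X)
    (u : ℕ → F) (hu : Tendsto u atTop (nhds 0))
    (v : ℕ → F)
    (hv : ∀ k : ℕ, v k = ∑' m : ℕ, PowerSeries.coeff m (Hinv ^ k) * u m) :
    ∀ k : ℕ,
      (Summable fun m : ℕ => PowerSeries.coeff m (H ^ k) * v m) ∧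
        u k = ∑' m : ℕ, PowerSeries.coeff m (H ^ k) * v m := by
  classical
  haveI : IsUltrametricDist F :=
    IsUltrametricDist.isUltrametricDist_of_forall_norm_add_le_max_norm hna
  -- norms of coefficients of powers are ≤ 1
  have hpow1 : ∀ (G : PowerSeries F), (∀ n, ‖PowerSeries.coeff n G‖ ≤ 1) →
      ∀ (k n : ℕ), ‖PowerSeries.coeff n (G ^ k)‖ ≤ 1 := by
    intro G hG k
    induction k with
    | zero =>
        intro n
        rw [pow_zero, PowerSeries.coeff_one]
        split <;> simp
    | succ k ih =>
        intro n
        rw [pow_succ, PowerSeries.coeff_mul]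
        refine IsUltrametricDist.norm_sum_le_of_forall_le_of_nonneg zero_le_one ?_
        intro p _
        calc ‖PowerSeries.coeff p.1 (G ^ k) * PowerSeries.coeff p.2 G‖
            ≤ ‖PowerSeries.coeff p.1 (G ^ k)‖ * ‖PowerSeries.coeff p.2 G‖ :=
              norm_mul_le _ _
          _ ≤ 1 * 1 := mul_le_mul (ih p.1) (hG p.2) (norm_nonneg _) zero_le_one
          _ = 1 := one_mul 1
  have hHpow1 := hpow1 H hH1
  have hHinvpow1 := hpow1 Hinv hHinv1
  -- vanishing of low coefficients of powers
  have hHinvz : ∀ {m n : ℕ}, n < m → PowerSeries.coeff n (Hinv ^ m) = 0 :=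
    fun h => coeff_pow_eq_zero_aux hHinv0 h
  -- u tends to zero along cofinite
  have hucof : Tendsto u cofinite (nhds 0) := by rwa [Nat.cofinite_eq_atTop]
  -- inner families are summable
  have hsum_inner : ∀ m : ℕ,
      Summable fun n : ℕ => PowerSeries.coeff n (Hinv ^ m) * u n := by
    intro m
    apply NonarchimedeanAddGroup.summable_of_tendsto_cofinite_zero
    rw [NormedAddCommGroup.tendsto_nhds_zero]
    intro ε hε
    filter_upwards [(NormedAddCommGroup.tendsto_nhds_zero.mp hucof) ε hε] with n hn
    calc ‖PowerSeries.coeff n (Hinv ^ m) * u n‖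
        ≤ ‖PowerSeries.coeff n (Hinv ^ m)‖ * ‖u n‖ := norm_mul_le _ _
      _ ≤ 1 * ‖u n‖ := by
          apply mul_le_mul_of_nonneg_right (hHinvpow1 m n) (norm_nonneg _)
      _ = ‖u n‖ := one_mul _
      _ < ε := by simpa using hn
  -- bound on tsum norms
  have htsum_bound : ∀ (f : ℕ → F) (C : ℝ), 0 ≤ C → Summable f →
      (∀ n, ‖f n‖ ≤ C) → ‖∑' n, f n‖ ≤ C := by
    intro f C hC hf hb
    have h : Tendsto (fun s : Finset ℕ => ‖∑ n ∈ s, f n‖) atTop (nhds ‖∑' n, f n‖) :=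
      hf.hasSum.norm
    refine le_of_tendsto h (Filter.Eventually.of_forall fun s => ?_)
    exact IsUltrametricDist.norm_sum_le_of_forall_le_of_nonneg hC (fun i _ => hb i)
  -- v is a null sequence
  have hvnull : Tendsto v atTop (nhds 0) := by
    rw [NormedAddCommGroup.tendsto_nhds_zero]
    intro ε hε
    have hε2 : (0:ℝ) < ε/2 := by linarith
    obtain ⟨N, hN⟩ := Filter.eventually_atTop.mp
      ((NormedAddCommGroup.tendsto_nhds_zero.mp hu) (ε/2) hε2)
    filter_upwards [Filter.eventually_ge_atTop N] with k hk
    have hb : ∀ n, ‖PowerSeries.coeff n (Hinv ^ k) * u n‖ ≤ ε/2 := by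
      intro n
      rcases lt_or_ge n k with h | h
      · rw [hHinvz h, zero_mul, norm_zero]; linarith
      · calc ‖PowerSeries.coeff n (Hinv ^ k) * u n‖
            ≤ ‖PowerSeries.coeff n (Hinv ^ k)‖ * ‖u n‖ := norm_mul_le _ _
          _ ≤ 1 * ‖u n‖ :=
              mul_le_mul_of_nonneg_right (hHinvpow1 k n) (norm_nonneg _)
          _ = ‖u n‖ := one_mul _
          _ ≤ ε/2 := le_of_lt (hN n (le_trans hk h))
    have hble := htsum_bound _ (ε/2) (le_of_lt hε2) (hsum_inner k) hb
    rw [← hv k] at hble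
    linarith
  -- the key algebraic identity
  have hkey : ∀ k n : ℕ, (∑ m ∈ Finset.range (n+1),
      PowerSeries.coeff m (H ^ k) * PowerSeries.coeff n (Hinv ^ m)) =
      (if n = k then 1 else 0) := by
    intro k n
    have h1 : psComp (H ^ k) Hinv = PowerSeries.X ^ k := by
      rw [psComp_pow_aux Hinv H hHinv0, hinv₂]
    have h2 := congrArg (PowerSeries.coeff n) h1
    simpa [psComp, PowerSeries.coeff_mk, PowerSeries.coeff_X_pow] using h2
  intro k
  -- the double family
  set f : ℕ × ℕ → F := fun p =>
    PowerSeries.coeff p.1 (H ^ k) * (PowerSeries.coeff p.2 (Hinv ^ p.1) * u p.2) with hf_def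
  have hfz : ∀ p : ℕ × ℕ, p.2 < p.1 → f p = 0 := by
    intro p h
    simp only [hf_def]
    rw [hHinvz h, zero_mul, mul_zero]
  have hfb : ∀ p : ℕ × ℕ, ‖f p‖ ≤ ‖u p.2‖ := by
    intro p
    simp only [hf_def]
    calc ‖PowerSeries.coeff p.1 (H ^ k) *
          (PowerSeries.coeff p.2 (Hinv ^ p.1) * u p.2)‖
        ≤ ‖PowerSeries.coeff p.1 (H ^ k)‖ *
            ‖PowerSeries.coeff p.2 (Hinv ^ p.1) * u p.2‖ := norm_mul_le _ _
      _ ≤ 1 * ‖PowerSeries.coeff p.2 (Hinv ^ p.1) * u p.2‖ :=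
          mul_le_mul_of_nonneg_right (hHpow1 k p.1) (norm_nonneg _)
      _ = ‖PowerSeries.coeff p.2 (Hinv ^ p.1) * u p.2‖ := one_mul _
      _ ≤ ‖PowerSeries.coeff p.2 (Hinv ^ p.1)‖ * ‖u p.2‖ := norm_mul_le _ _
      _ ≤ 1 * ‖u p.2‖ :=
          mul_le_mul_of_nonneg_right (hHinvpow1 p.1 p.2) (norm_nonneg _)
      _ = ‖u p.2‖ := one_mul _
  have hsumf : Summable f := by
    apply NonarchimedeanAddGroup.summable_of_tendsto_cofinite_zero
    rw [NormedAddCommGroup.tendsto_nhds_zero]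
    intro ε hε
    rw [Filter.eventually_cofinite]
    have hS : {n : ℕ | ¬ ‖u n‖ < ε}.Finite := by
      have h := (NormedAddCommGroup.tendsto_nhds_zero.mp hucof) ε hε
      rwa [Filter.eventually_cofinite] at h
    obtain ⟨M, hM⟩ := hS.bddAbove
    apply Set.Finite.subset ((Set.finite_Iic M).prod hS)
    intro p hp
    simp only [Set.mem_setOf_eq] at hp
    have h2 : ¬ ‖u p.2‖ < ε := fun h => hp (lt_of_le_of_lt (hfb p) h)
    have h1 : p.1 ≤ p.2 := by
      by_contra h
      push_neg at h
      exact hp (by rw [hfz p h, norm_zero]; exact hε)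
    exact ⟨le_trans h1 (hM h2), h2⟩
  -- relating the outer family to v
  have hfeq : ∀ m : ℕ, PowerSeries.coeff m (H ^ k) * v m = ∑' n, f (m, n) := by
    intro m
    rw [hv m, ← tsum_mul_left]
  have hsummable : Summable fun m : ℕ => PowerSeries.coeff m (H ^ k) * v m :=
    hsumf.prod.congr (fun m => (hfeq m).symm)
  refine ⟨hsummable, ?_⟩
  -- swap the order of summation
  have huncurry : Summable (Function.uncurry fun m n => f (m, n)) := by
    exact hsumf.congr (fun p => rfl)
  have hswap : ∑' (m : ℕ) (n : ℕ), f (m, n) = ∑' (n : ℕ) (m : ℕ), f (m, n) :=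
    (Summable.tsum_comm huncurry).symm
  have hinner : ∀ n : ℕ, ∑' m, f (m, n) = (if n = k then (1:F) else 0) * u n := by
    intro n
    rw [tsum_eq_sum (s := Finset.range (n+1))
      (fun m hm => hfz (m, n) (by simpa using Nat.lt_of_succ_le (not_lt.mp
        (fun hc => hm (Finset.mem_range.mpr hc)))))]
    rw [← hkey k n, Finset.sum_mul]
    exact Finset.sum_congr rfl fun m _ => by simp only [hf_def]; ring
  have hlast : ∑' n : ℕ, (if n = k then (1:F) else 0) * u n = u k := by
    have hcong : ∀ n : ℕ, (if n = k then (1:F) else 0) * u n =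
        (if n = k then u k else 0) := by
      intro n
      by_cases h : n = k <;> simp [h]
    rw [tsum_congr hcong, tsum_ite_eq]
  calc u k = ∑' n : ℕ, (if n = k then (1:F) else 0) * u n := hlast.symm
    _ = ∑' (n : ℕ) (m : ℕ), f (m, n) := (tsum_congr hinner).symm
    _ = ∑' (m : ℕ) (n : ℕ), f (m, n) := hswap.symm
    _ = ∑' m : ℕ, PowerSeries.coeff m (H ^ k) * v m :=
        (tsum_congr hfeq).symm
end

section
/- Admissibility is inherited by the dual sequence: let F be a field complete with respect to a non-Archimedean norm and let Q ∈ F⟦T⟧ have zero constant coefficient and all coefficients of norm ≤ 1. Let u : ℕ → F be a null sequence and define v_k := ∑_{m≥0} (coeff_m(Q^k))·u_m. Then each of these families is summable, v_0 = u_0, and v is again a null sequence; moreover ‖v_k‖ ≤ sup_{m ≥ k} ‖u_m‖ for every k (since Q^k has T-adic order ≥ k). -/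
open Filter

/-- Admissibility is inherited by the dual sequence: for `Q` with zero
constant coefficient and integral coefficients and a null sequence `u`, the
sequence `v_k = ∑_m coeff_m(Q^k)·u_m` is well defined, satisfies `v_0 = u_0`,
is again null, and satisfies `‖v_k‖ ≤ sup_{m ≥ k} ‖u_m‖`. -/
theorem dual_sequence_null {F : Type*} [NormedField F] [CompleteSpace F]
    (hna : ∀ x y : F, ‖x + y‖ ≤ max ‖x‖ ‖y‖)
    (Q : PowerSeries F) (hQ0 : PowerSeries.constantCoeff Q = 0)
    (hQ1 : ∀ n : ℕ, ‖PowerSeries.coeff n Q‖ ≤ 1)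
    (u : ℕ → F) (hu : Tendsto u atTop (nhds 0))
    (v : ℕ → F)
    (hv : ∀ k : ℕ, v k = ∑' m : ℕ, PowerSeries.coeff m (Q ^ k) * u m) :
    (∀ k : ℕ, Summable fun m : ℕ => PowerSeries.coeff m (Q ^ k) * u m) ∧
      v 0 = u 0 ∧ Tendsto v atTop (nhds 0) ∧
      ∀ k : ℕ, ‖v k‖ ≤ ⨆ m : ℕ, ‖u (k + m)‖ := by
  have hud : IsUltrametricDist F :=
    IsUltrametricDist.isUltrametricDist_of_isNonarchimedean_norm hna
  -- coefficients of Q^k have norm ≤ 1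
  have hQk : ∀ k n : ℕ, ‖PowerSeries.coeff n (Q ^ k)‖ ≤ 1 := by
    intro k
    induction k with
    | zero =>
      intro n
      rw [pow_zero, PowerSeries.coeff_one]
      split <;> simp
    | succ k ih =>
      intro n
      rw [pow_succ, PowerSeries.coeff_mul]
      refine IsUltrametricDist.norm_sum_le_of_forall_le_of_nonneg zero_le_one ?_
      intro i _
      calc ‖PowerSeries.coeff i.1 (Q ^ k) * PowerSeries.coeff i.2 Q‖
          ≤ ‖PowerSeries.coeff i.1 (Q ^ k)‖ * ‖PowerSeries.coeff i.2 Q‖ :=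
            norm_mul_le _ _
        _ ≤ 1 * 1 := mul_le_mul (ih i.1) (hQ1 i.2) (norm_nonneg _) zero_le_one
        _ = 1 := one_mul 1
  -- low coefficients of Q^k vanish
  have hvan : ∀ k m : ℕ, m < k → PowerSeries.coeff m (Q ^ k) = 0 := by
    intro k m hm
    have hX : (PowerSeries.X : PowerSeries F) ∣ Q := PowerSeries.X_dvd_iff.mpr hQ0
    have : (PowerSeries.X : PowerSeries F) ^ k ∣ Q ^ k := pow_dvd_pow_of_dvd hX k
    exact PowerSeries.X_pow_dvd_iff.mp this m hm
  -- summability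
  have hsum : ∀ k : ℕ, Summable fun m : ℕ => PowerSeries.coeff m (Q ^ k) * u m := by
    intro k
    apply NonarchimedeanAddGroup.summable_of_tendsto_cofinite_zero
    rw [Nat.cofinite_eq_atTop]
    apply squeeze_zero_norm (fun m => ?_) (by simpa using hu.norm)
    calc ‖PowerSeries.coeff m (Q ^ k) * u m‖
        ≤ ‖PowerSeries.coeff m (Q ^ k)‖ * ‖u m‖ := norm_mul_le _ _
      _ ≤ 1 * ‖u m‖ := mul_le_mul_of_nonneg_right (hQk k m) (norm_nonneg _)
      _ = ‖u m‖ := one_mul _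
  -- v 0 = u 0
  have hv0 : v 0 = u 0 := by
    rw [hv 0]
    rw [tsum_eq_single 0 (fun m hm => ?_)]
    · simp
    · rw [pow_zero, PowerSeries.coeff_one, if_neg hm, zero_mul]
  -- bddAbove of tails
  have hbdd : ∀ k : ℕ, BddAbove (Set.range fun m : ℕ => ‖u (k + m)‖) := by
    intro k
    have : Tendsto (fun m : ℕ => ‖u (k + m)‖) atTop (nhds 0) := by
      have := hu.norm.comp (tendsto_add_atTop_nat k)
      simpa [Function.comp_def, Nat.add_comm] using this
    exact this.bddAbove_range
  -- norm bound
  have hbound : ∀ k : ℕ, ‖v k‖ ≤ ⨆ m : ℕ, ‖u (k + m)‖ := by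
    intro k
    have hC0 : (0 : ℝ) ≤ ⨆ m : ℕ, ‖u (k + m)‖ :=
      le_trans (norm_nonneg (u (k + 0))) (le_ciSup (hbdd k) 0)
    rw [hv k]
    refine IsUltrametricDist.norm_tsum_le_of_forall_le_of_nonneg hC0 (fun m => ?_)
    rcases lt_or_ge m k with hm | hm
    · rw [hvan k m hm, zero_mul, norm_zero]; exact hC0
    · calc ‖PowerSeries.coeff m (Q ^ k) * u m‖
          ≤ ‖PowerSeries.coeff m (Q ^ k)‖ * ‖u m‖ := norm_mul_le _ _
        _ ≤ 1 * ‖u m‖ := mul_le_mul_of_nonneg_right (hQk k m) (norm_nonneg _)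
        _ = ‖u (k + (m - k))‖ := by rw [one_mul, Nat.add_sub_cancel' hm]
        _ ≤ ⨆ m : ℕ, ‖u (k + m)‖ := le_ciSup (hbdd k) (m - k)
  -- tail sup tends to zero
  have htail : Tendsto (fun k : ℕ => ⨆ m : ℕ, ‖u (k + m)‖) atTop (nhds 0) := by
    rw [Metric.tendsto_atTop]
    intro ε hε
    obtain ⟨N, hN⟩ := (Metric.tendsto_atTop.mp hu (ε / 2) (half_pos hε))
    refine ⟨N, fun k hk => ?_⟩
    have hC0 : (0 : ℝ) ≤ ⨆ m : ℕ, ‖u (k + m)‖ :=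
      le_trans (norm_nonneg (u (k + 0))) (le_ciSup (hbdd k) 0)
    rw [Real.dist_eq, sub_zero, abs_of_nonneg hC0]
    have : (⨆ m : ℕ, ‖u (k + m)‖) ≤ ε / 2 := by
      refine ciSup_le fun m => ?_
      have := hN (k + m) (le_trans hk (Nat.le_add_right k m))
      rw [dist_zero_right] at this
      exact this.le
    linarith
  have hvnull : Tendsto v atTop (nhds 0) :=
    squeeze_zero_norm hbound htail
  exact ⟨hsum, hv0, hvnull, hbound⟩
end
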